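/- arXiv:1712.00594 — 5 statements merged into one kernel-verified Lean document; each statement's English description precedes it below -/
import Mathlib

section
/- Let μ be a finite Borel measure on ℂ with compact support and let I ⊂ [0,π] be an open set. Then ∬_{x−y ∈ K_I∖{0}} |x−y|^{−1} dμ(x) dμ(y) ≤ ∫_{I⊥} ‖P_θμ‖₂² dθ. -/
open MeasureTheory Measure Set Filter Metric
open scoped ENNReal Real Topology Classical

/-- Coordinate of the orthogonal projection of `z ∈ ℂ` onto the line `L_θ = {r e^{iθ}}`. -/
noncomputable def projCoord (θ : ℝ) (z : ℂ) : ℝ :=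
  (z * Complex.exp (-(θ : ℂ) * Complex.I)).re

/-- Orthogonal projection of `z ∈ ℂ` onto the line `L_θ`, as a point of `ℂ`. -/
noncomputable def projPt (θ : ℝ) (z : ℂ) : ℂ :=
  (projCoord θ z : ℂ) * Complex.exp ((θ : ℂ) * Complex.I)

/-- `‖P_θ μ‖₂²`: the squared `L²` norm of the density of the projection of `μ` onto `L_θ`
(w.r.t. length), equal to `∞` if the projection is not absolutely continuous with
square-integrable density. -/
noncomputable def projL2sq (θ : ℝ) (μ : Measure ℂ) : ℝ≥0∞ :=
  if _h : (μ.map (projCoord θ)) ≪ (volume : Measure ℝ) then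
    ∫⁻ r, ((μ.map (projCoord θ)).rnDeriv volume r) ^ 2
  else ⊤

/-- The cone `K_J = {r e^{iθ} : r ∈ ℝ, θ ∈ J} ⊆ ℂ`. -/
def coneOf (J : Set ℝ) : Set ℂ :=
  {z | ∃ r θ : ℝ, θ ∈ J ∧ z = (r : ℂ) * Complex.exp ((θ : ℂ) * Complex.I)}


lemma continuous_projCoord : Continuous fun p : ℝ × ℂ => projCoord p.1 p.2 := by
  unfold projCoord; fun_prop

lemma projCoord_sub (θ : ℝ) (x y : ℂ) :
    projCoord θ (x - y) = projCoord θ x - projCoord θ y := by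
  simp [projCoord, sub_mul, Complex.sub_re]

lemma projCoord_formula (θ r α : ℝ) :
    projCoord θ ((r : ℂ) * Complex.exp ((α : ℂ) * Complex.I)) = r * Real.cos (α - θ) := by
  unfold projCoord
  rw [mul_assoc, ← Complex.exp_add]
  have h : (α : ℂ) * Complex.I + -(θ : ℂ) * Complex.I = ((α - θ : ℝ) : ℂ) * Complex.I := by
    push_cast; ring
  rw [h, Complex.re_ofReal_mul, Complex.exp_ofReal_mul_I_re]

lemma meas_ind {α : Type*} [MeasurableSpace α] {g : α → ℝ} (hg : Measurable g) (d : ℝ) :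
    Measurable fun a => (if |g a| ≤ d then (1 : ℝ≥0∞) else 0) :=
  Measurable.ite (measurableSet_le hg.abs measurable_const) measurable_const measurable_const

open scoped NNReal in
lemma amgm_ennreal (a b : ℝ≥0∞) : 2 * (a * b) ≤ a ^ 2 + b ^ 2 := by
  rcases eq_or_ne a 0 with rfl | ha0; · simp
  rcases eq_or_ne b 0 with rfl | hb0; · simp
  rcases eq_or_ne a ⊤ with rfl | hat
  · have : (⊤ : ℝ≥0∞) ^ 2 = ⊤ := ENNReal.top_pow (by norm_num)
    simp [this]
  rcases eq_or_ne b ⊤ with rfl | hbt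
  · have : (⊤ : ℝ≥0∞) ^ 2 = ⊤ := ENNReal.top_pow (by norm_num)
    simp [this]
  lift a to ℝ≥0 using hat
  lift b to ℝ≥0 using hbt
  have : 2 * (a * b) ≤ a ^ 2 + b ^ 2 := by
    rw [← NNReal.coe_le_coe]; push_cast; nlinarith [sq_nonneg ((a : ℝ) - b)]
  exact_mod_cast this

lemma schur (μ : Measure ℂ) [IsFiniteMeasure μ] (θ δ : ℝ) (hδ : 0 < δ) :
    (∫⁻ x, ∫⁻ y, (if |projCoord θ x - projCoord θ y| ≤ δ then (1 : ℝ≥0∞) else 0) ∂μ ∂μ)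
      ≤ ENNReal.ofReal (2 * δ) * projL2sq θ μ := by
  have hc : Measurable (projCoord θ) :=
    (continuous_projCoord.comp (Continuous.prodMk_right θ)).measurable
  set ν := μ.map (projCoord θ) with hν
  -- rewrite double integral as double integral over ν
  have hFmeas : Measurable fun s : ℝ => ∫⁻ t, (if |s - t| ≤ δ then (1 : ℝ≥0∞) else 0) ∂ν :=
    Measurable.lintegral_prod_right'
      (f := fun q : ℝ × ℝ => if |q.1 - q.2| ≤ δ then (1 : ℝ≥0∞) else 0)
      (meas_ind (measurable_fst.sub measurable_snd) δ)
  have hstep : (∫⁻ x, ∫⁻ y, (if |projCoord θ x - projCoord θ y| ≤ δ then (1 : ℝ≥0∞) else 0) ∂μ ∂μ)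
      = ∫⁻ s, ∫⁻ t, (if |s - t| ≤ δ then (1 : ℝ≥0∞) else 0) ∂ν ∂ν := by
    rw [hν, lintegral_map hFmeas hc]
    refine lintegral_congr fun x => ?_
    rw [lintegral_map (meas_ind (g := fun t => projCoord θ x - t) (measurable_const.sub measurable_id') δ) hc]
  rw [hstep]
  by_cases hac : ν ≪ (volume : Measure ℝ)
  · have hL : projL2sq θ μ = ∫⁻ r, (ν.rnDeriv volume r) ^ 2 := by
      rw [projL2sq, dif_pos (hν ▸ hac)]
    set f := ν.rnDeriv volume with hfdef
    have hf : Measurable f := Measure.measurable_rnDeriv ν volume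
    have hwd : volume.withDensity f = ν := Measure.withDensity_rnDeriv_eq ν volume hac
    rw [hL, ← hwd]
    -- unfold withDensity in both integrals
    have hGmeas : Measurable fun s : ℝ => ∫⁻ t, f t * (if |s - t| ≤ δ then (1 : ℝ≥0∞) else 0) :=
      Measurable.lintegral_prod_right'
        (f := fun q : ℝ × ℝ => f q.2 * (if |q.1 - q.2| ≤ δ then (1 : ℝ≥0∞) else 0))
        ((hf.comp measurable_snd).mul (meas_ind (measurable_fst.sub measurable_snd) δ))
    have inner2 : ∀ s : ℝ, (∫⁻ t, (if |s - t| ≤ δ then (1 : ℝ≥0∞) else 0) ∂(volume.withDensity f))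
        = ∫⁻ t, f t * (if |s - t| ≤ δ then (1 : ℝ≥0∞) else 0) := by
      intro s
      rw [lintegral_withDensity_eq_lintegral_mul volume hf
        (meas_ind (g := fun t => s - t) (measurable_const.sub measurable_id') δ)]
      rfl
    have houter : (∫⁻ s, ∫⁻ t, (if |s - t| ≤ δ then (1 : ℝ≥0∞) else 0)
          ∂(volume.withDensity f) ∂(volume.withDensity f))
        = ∫⁻ s, f s * ∫⁻ t, f t * (if |s - t| ≤ δ then (1 : ℝ≥0∞) else 0) := by
      rw [show (fun s => ∫⁻ t, (if |s - t| ≤ δ then (1 : ℝ≥0∞) else 0) ∂(volume.withDensity f))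
          = fun s => ∫⁻ t, f t * (if |s - t| ≤ δ then (1 : ℝ≥0∞) else 0) from funext inner2]
      rw [lintegral_withDensity_eq_lintegral_mul volume hf hGmeas]
      rfl
    rw [houter]
    -- now the Schur bound over volume × volume
    have hballs : ∀ s : ℝ, (∫⁻ t, (if |s - t| ≤ δ then (1 : ℝ≥0∞) else 0)) = ENNReal.ofReal (2 * δ) := by
      intro s
      have hset : (fun t : ℝ => if |s - t| ≤ δ then (1 : ℝ≥0∞) else 0)
          = (Metric.closedBall s δ).indicator 1 := by
        ext t
        simp [Set.indicator_apply, Metric.mem_closedBall, Real.dist_eq, abs_sub_comm]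
      rw [hset, lintegral_indicator_one measurableSet_closedBall, Real.volume_closedBall]
    have hballt : ∀ t : ℝ, (∫⁻ s, (if |s - t| ≤ δ then (1 : ℝ≥0∞) else 0)) = ENNReal.ofReal (2 * δ) := by
      intro t
      have hset : (fun s : ℝ => if |s - t| ≤ δ then (1 : ℝ≥0∞) else 0)
          = (Metric.closedBall t δ).indicator 1 := by
        ext s
        simp [Set.indicator_apply, Metric.mem_closedBall, Real.dist_eq]
      rw [hset, lintegral_indicator_one measurableSet_closedBall, Real.volume_closedBall]
    set D := ∫⁻ s, f s * ∫⁻ t, f t * (if |s - t| ≤ δ then (1 : ℝ≥0∞) else 0) with hD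
    have key : 2 * D ≤ 2 * (ENNReal.ofReal (2 * δ) * ∫⁻ r, f r ^ 2) := by
      have hDrw : 2 * D = ∫⁻ s, ∫⁻ t, 2 * (f s * (f t * (if |s - t| ≤ δ then (1 : ℝ≥0∞) else 0))) := by
        rw [hD, ← lintegral_const_mul 2 (f := fun s => f s * ∫⁻ t, f t * (if |s - t| ≤ δ then (1 : ℝ≥0∞) else 0)) (hf.mul hGmeas)]
        refine lintegral_congr fun s => ?_
        rw [← mul_assoc,
          ← lintegral_const_mul (2 * f s) (f := fun t => f t * (if |s - t| ≤ δ then (1 : ℝ≥0∞) else 0)) (hf.mul (meas_ind (g := fun t => s - t) (measurable_const.sub measurable_id') δ))]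
        refine lintegral_congr fun t => ?_
        ring
      rw [hDrw]
      have hpt : ∀ s t : ℝ, 2 * (f s * (f t * (if |s - t| ≤ δ then (1 : ℝ≥0∞) else 0)))
          ≤ f s ^ 2 * (if |s - t| ≤ δ then (1 : ℝ≥0∞) else 0)
            + f t ^ 2 * (if |s - t| ≤ δ then (1 : ℝ≥0∞) else 0) := by
        intro s t
        have : 2 * (f s * (f t * (if |s - t| ≤ δ then (1 : ℝ≥0∞) else 0)))
            = (2 * (f s * f t)) * (if |s - t| ≤ δ then (1 : ℝ≥0∞) else 0) := by ring
        rw [this, ← add_mul]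
        exact mul_le_mul_left (amgm_ennreal _ _) _
      calc (∫⁻ s, ∫⁻ t, 2 * (f s * (f t * (if |s - t| ≤ δ then (1 : ℝ≥0∞) else 0))))
          ≤ ∫⁻ s, ∫⁻ t, (f s ^ 2 * (if |s - t| ≤ δ then (1 : ℝ≥0∞) else 0)
            + f t ^ 2 * (if |s - t| ≤ δ then (1 : ℝ≥0∞) else 0)) :=
            lintegral_mono fun s => lintegral_mono fun t => hpt s t
        _ = (∫⁻ s, ∫⁻ t, f s ^ 2 * (if |s - t| ≤ δ then (1 : ℝ≥0∞) else 0))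
            + ∫⁻ s, ∫⁻ t, f t ^ 2 * (if |s - t| ≤ δ then (1 : ℝ≥0∞) else 0) := by
            rw [← lintegral_add_left]
            · refine lintegral_congr fun s => ?_
              rw [lintegral_add_left]
              exact (measurable_const.mul (meas_ind (measurable_const.sub measurable_id') δ))
            · exact Measurable.lintegral_prod_right'
                (f := fun q : ℝ × ℝ => f q.1 ^ 2 * (if |q.1 - q.2| ≤ δ then (1 : ℝ≥0∞) else 0))
                (((hf.comp measurable_fst).pow_const 2).mul
                  (meas_ind (measurable_fst.sub measurable_snd) δ))
        _ = 2 * (ENNReal.ofReal (2 * δ) * ∫⁻ r, f r ^ 2) := by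
            have hA : (∫⁻ s, ∫⁻ t, f s ^ 2 * (if |s - t| ≤ δ then (1 : ℝ≥0∞) else 0))
                = ENNReal.ofReal (2 * δ) * ∫⁻ r, f r ^ 2 := by
              calc (∫⁻ s, ∫⁻ t, f s ^ 2 * (if |s - t| ≤ δ then (1 : ℝ≥0∞) else 0))
                  = ∫⁻ s, f s ^ 2 * ENNReal.ofReal (2 * δ) := by
                    refine lintegral_congr fun s => ?_
                    rw [lintegral_const_mul (f s ^ 2)
                      (meas_ind (g := fun t => s - t) (measurable_const.sub measurable_id') δ), hballs s]
                _ = ENNReal.ofReal (2 * δ) * ∫⁻ r, f r ^ 2 := by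
                    simp_rw [mul_comm]
                    rw [lintegral_const_mul _ (hf.pow_const 2)]
            have hB : (∫⁻ s, ∫⁻ t, f t ^ 2 * (if |s - t| ≤ δ then (1 : ℝ≥0∞) else 0))
                = ENNReal.ofReal (2 * δ) * ∫⁻ r, f r ^ 2 := by
              rw [lintegral_lintegral_swap]
              · calc (∫⁻ t, ∫⁻ s, f t ^ 2 * (if |s - t| ≤ δ then (1 : ℝ≥0∞) else 0))
                    = ∫⁻ t, f t ^ 2 * ENNReal.ofReal (2 * δ) := by
                      refine lintegral_congr fun t => ?_
                      rw [lintegral_const_mul (f t ^ 2)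
                        (meas_ind (g := fun s => s - t) (measurable_id'.sub measurable_const) δ), hballt t]
                  _ = ENNReal.ofReal (2 * δ) * ∫⁻ r, f r ^ 2 := by
                      simp_rw [mul_comm]
                      rw [lintegral_const_mul _ (hf.pow_const 2)]
              · exact (((hf.comp measurable_snd).pow_const 2).mul
                  (meas_ind (measurable_fst.sub measurable_snd) δ)).aemeasurable
            rw [hA, hB]; ring
    exact (ENNReal.mul_le_mul_iff_right two_ne_zero ENNReal.ofNat_ne_top).1 key
  · have hL : projL2sq θ μ = ⊤ := by
      rw [projL2sq, dif_neg (hν ▸ hac)]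
    rw [hL, ENNReal.mul_top (by simp [ENNReal.ofReal_eq_zero]; linarith)]
    exact le_top

set_option maxHeartbeats 1000000 in
/-- For a finite compactly supported Borel measure `μ` on `ℂ` and an open
set `I ⊆ [0,π]`, `∬_{x-y ∈ K_I \ {0}} |x-y|⁻¹ dμ(x) dμ(y) ≤ ∫_{I⊥} ‖P_θ μ‖₂² dθ`. -/
theorem statement9 (μ : Measure ℂ) [IsFiniteMeasure μ]
    (hcomp : ∃ K : Set ℂ, IsCompact K ∧ μ Kᶜ = 0)
    (I : Set ℝ) (hIopen : IsOpen I) (hIsub : I ⊆ Set.Icc 0 π) :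
    (∫⁻ x, ∫⁻ y, Set.indicator {y | x - y ∈ coneOf I \ {0}}
        (fun y => ENNReal.ofReal ‖x - y‖⁻¹) y ∂μ ∂μ)
      ≤ ∫⁻ θ in (fun θ => θ + π / 2) '' I, projL2sq θ μ := by
  classical
  set T : Set ℝ := (fun θ => θ + π / 2) '' I with hT
  set δ : ℕ → ℝ := fun n => 1 / (n + 1) with hδdef
  have hδpos : ∀ n, 0 < δ n := fun n => by positivity
  have hδto : Tendsto δ atTop (𝓝 0) := tendsto_one_div_add_atTop_nhds_zero_nat
  have hmp : Measurable fun p : ℝ × ℂ => projCoord p.1 p.2 := continuous_projCoord.measurable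
  have hc2 : ∀ n, ENNReal.ofReal (2 * δ n) ≠ 0 := fun n => by
    simp only [ne_eq, ENNReal.ofReal_eq_zero, not_le]
    linarith [hδpos n]
  have hc3 : ∀ n, ENNReal.ofReal (2 * δ n) ≠ ⊤ := fun n => ENNReal.ofReal_ne_top
  set g : ℕ → ℂ → ℂ → ℝ≥0∞ := fun n x y =>
    (ENNReal.ofReal (2 * δ n))⁻¹ *
      ∫⁻ θ in T, (if |projCoord θ (x - y)| ≤ δ n then (1 : ℝ≥0∞) else 0) with hg
  -- measurability of g in the pair
  have hind2 : ∀ d : ℝ, Measurable fun q : (ℂ × ℂ) × ℝ =>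
      (if |projCoord q.2 (q.1.1 - q.1.2)| ≤ d then (1 : ℝ≥0∞) else 0) := fun d =>
    meas_ind (hmp.comp (measurable_snd.prodMk ((measurable_fst.fst).sub measurable_fst.snd))) d
  have hgmeas : ∀ n, Measurable fun p : ℂ × ℂ => g n p.1 p.2 := fun n =>
    (Measurable.lintegral_prod_right' (hind2 (δ n))).const_mul _
  -- openness of T
  have hTopen : IsOpen T := by
    have hTeq : T = (fun θ => θ - π / 2) ⁻¹' I := by
      rw [hT]; ext t
      constructor
      · rintro ⟨a, ha, rfl⟩; simpa using ha
      · intro h; exact ⟨t - π / 2, h, by ring⟩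
    rw [hTeq]; exact hIopen.preimage (continuous_sub_right _)
  -- pointwise liminf bound
  have hpt : ∀ x y : ℂ, Set.indicator {y | x - y ∈ coneOf I \ {0}}
      (fun y => ENNReal.ofReal ‖x - y‖⁻¹) y ≤ atTop.liminf fun n => g n x y := by
    intro x y
    by_cases hmem : y ∈ {y | x - y ∈ coneOf I \ {0}}
    · rw [Set.indicator_of_mem hmem]
      obtain ⟨⟨r, α, hα, hzeq⟩, hz0⟩ := hmem
      have hz0' : x - y ≠ 0 := by simpa using hz0
      have hr : r ≠ 0 := by
        rintro rfl; apply hz0'; simpa using hzeq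
      have hrpos : 0 < |r| := abs_pos.2 hr
      have hnorm : ‖x - y‖ = |r| := by
        rw [hzeq, norm_mul, Complex.norm_exp_ofReal_mul_I, Complex.norm_real, Real.norm_eq_abs,
          mul_one]
      set θ₀ := α + π / 2 with hθ₀
      have hθ₀T : θ₀ ∈ T := ⟨α, hα, rfl⟩
      obtain ⟨ε, hεpos, hball⟩ := Metric.isOpen_iff.1 hTopen θ₀ hθ₀T
      have hproj : ∀ θ : ℝ, |projCoord θ (x - y)| ≤ |r| * |θ - θ₀| := by
        intro θ
        rw [hzeq, projCoord_formula]
        have hcos : Real.cos (α - θ) = -Real.sin (θ - θ₀) := by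
          rw [← Real.cos_neg, neg_sub]
          have h2 : θ - α = (θ - θ₀) + π / 2 := by rw [hθ₀]; ring
          rw [h2, Real.cos_add_pi_div_two]
        rw [abs_mul, hcos, abs_neg]
        exact mul_le_mul_of_nonneg_left Real.abs_sin_le_abs (abs_nonneg r)
      have hkey : ∀ n : ℕ, δ n < |r| * ε → ENNReal.ofReal ‖x - y‖⁻¹ ≤ g n x y := by
        intro n hn
        have hsub : Metric.closedBall θ₀ (δ n / |r|) ⊆ T := by
          refine subset_trans (fun t ht => ?_) hball
          rw [Metric.mem_closedBall] at ht
          rw [Metric.mem_ball]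
          calc dist t θ₀ ≤ δ n / |r| := ht
            _ < ε := by rw [div_lt_iff₀ hrpos, mul_comm]; exact hn
        have hone : ENNReal.ofReal (2 * (δ n / |r|))
            ≤ ∫⁻ θ in T, (if |projCoord θ (x - y)| ≤ δ n then (1 : ℝ≥0∞) else 0) := by
          have e1 : ENNReal.ofReal (2 * (δ n / |r|))
              = volume (Metric.closedBall θ₀ (δ n / |r|)) := (Real.volume_closedBall _ _).symm
          have e2 : volume (Metric.closedBall θ₀ (δ n / |r|))
              = ∫⁻ θ in Metric.closedBall θ₀ (δ n / |r|), (1 : ℝ≥0∞) := (setLIntegral_one _).symm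
          have e3 : (∫⁻ θ in Metric.closedBall θ₀ (δ n / |r|), (1 : ℝ≥0∞))
              = ∫⁻ θ in Metric.closedBall θ₀ (δ n / |r|),
                  (if |projCoord θ (x - y)| ≤ δ n then (1 : ℝ≥0∞) else 0) := by
            refine setLIntegral_congr_fun measurableSet_closedBall (fun θ hθ => ?_)
            rw [if_pos]
            calc |projCoord θ (x - y)| ≤ |r| * |θ - θ₀| := hproj θ
              _ ≤ |r| * (δ n / |r|) := by
                  refine mul_le_mul_of_nonneg_left ?_ (abs_nonneg r)
                  rw [Metric.mem_closedBall, Real.dist_eq] at hθ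
                  exact hθ
              _ = δ n := by field_simp
          rw [e1, e2, e3] at *
          exact lintegral_mono_set hsub
        calc ENNReal.ofReal ‖x - y‖⁻¹
            = (ENNReal.ofReal (2 * δ n))⁻¹ * ENNReal.ofReal (2 * (δ n / |r|)) := by
              have hsplit : ENNReal.ofReal (2 * (δ n / |r|))
                  = ENNReal.ofReal (2 * δ n) * ENNReal.ofReal |r|⁻¹ := by
                rw [← ENNReal.ofReal_mul (by positivity)]
                congr 1; ring
              rw [hnorm, hsplit, ← mul_assoc,
                ENNReal.inv_mul_cancel (hc2 n) (hc3 n), one_mul]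
          _ ≤ g n x y := mul_le_mul_right hone _
      have hev : ∀ᶠ n in atTop, ENNReal.ofReal ‖x - y‖⁻¹ ≤ g n x y :=
        (hδto.eventually_lt_const (by positivity : (0 : ℝ) < |r| * ε)).mono hkey
      exact le_liminf_of_le (by isBoundedDefault) hev
    · rw [Set.indicator_of_notMem hmem]; exact zero_le
  -- key bound for fixed n
  have keybound : ∀ n : ℕ, (∫⁻ x, ∫⁻ y, g n x y ∂μ ∂μ) ≤ ∫⁻ θ in T, projL2sq θ μ := by
    intro n
    have c_ne_top : (ENNReal.ofReal (2 * δ n))⁻¹ ≠ ⊤ := by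
      simp [ENNReal.inv_ne_top, hc2 n, hδpos n]
    have pull : (∫⁻ x, ∫⁻ y, g n x y ∂μ ∂μ)
        = (ENNReal.ofReal (2 * δ n))⁻¹ * ∫⁻ x, ∫⁻ y,
            (∫⁻ θ in T, (if |projCoord θ (x - y)| ≤ δ n then (1 : ℝ≥0∞) else 0)) ∂μ ∂μ := by
      rw [← lintegral_const_mul' _ _ c_ne_top]
      refine lintegral_congr fun x => ?_
      rw [← lintegral_const_mul' _ _ c_ne_top]
    rw [pull]
    have swap1 : ∀ x : ℂ, (∫⁻ y, (∫⁻ θ in T,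
          (if |projCoord θ (x - y)| ≤ δ n then (1 : ℝ≥0∞) else 0)) ∂μ)
        = ∫⁻ θ in T, (∫⁻ y, (if |projCoord θ (x - y)| ≤ δ n then (1 : ℝ≥0∞) else 0) ∂μ) := by
      intro x
      exact lintegral_lintegral_swap
        ((meas_ind (hmp.comp (measurable_snd.prodMk
          ((measurable_const).sub measurable_fst))) (δ n)).aemeasurable)
    have swap2 : (∫⁻ x, (∫⁻ θ in T, (∫⁻ y,
          (if |projCoord θ (x - y)| ≤ δ n then (1 : ℝ≥0∞) else 0) ∂μ)) ∂μ)
        = ∫⁻ θ in T, (∫⁻ x, (∫⁻ y,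
          (if |projCoord θ (x - y)| ≤ δ n then (1 : ℝ≥0∞) else 0) ∂μ) ∂μ) := by
      refine lintegral_lintegral_swap ?_
      refine Measurable.aemeasurable ?_
      exact Measurable.lintegral_prod_right'
        (f := fun q : (ℂ × ℝ) × ℂ => if |projCoord q.1.2 (q.1.1 - q.2)| ≤ δ n then (1 : ℝ≥0∞) else 0)
        (meas_ind (hmp.comp ((measurable_fst.snd).prodMk
          ((measurable_fst.fst).sub measurable_snd))) (δ n))
    calc (ENNReal.ofReal (2 * δ n))⁻¹ * ∫⁻ x, ∫⁻ y,
            (∫⁻ θ in T, (if |projCoord θ (x - y)| ≤ δ n then (1 : ℝ≥0∞) else 0)) ∂μ ∂μ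
        = (ENNReal.ofReal (2 * δ n))⁻¹ * ∫⁻ θ in T, (∫⁻ x, (∫⁻ y,
            (if |projCoord θ (x - y)| ≤ δ n then (1 : ℝ≥0∞) else 0) ∂μ) ∂μ) := by
          rw [← swap2]
          congr 1
          exact lintegral_congr swap1
      _ ≤ (ENNReal.ofReal (2 * δ n))⁻¹ * ∫⁻ θ in T, ENNReal.ofReal (2 * δ n) * projL2sq θ μ := by
          refine mul_le_mul_right (lintegral_mono fun θ => ?_) _
          have : (∫⁻ x, ∫⁻ y, (if |projCoord θ (x - y)| ≤ δ n then (1 : ℝ≥0∞) else 0) ∂μ ∂μ)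
              = ∫⁻ x, ∫⁻ y, (if |projCoord θ x - projCoord θ y| ≤ δ n then (1 : ℝ≥0∞) else 0) ∂μ ∂μ := by
            simp_rw [projCoord_sub]
          rw [this]
          exact schur μ θ (δ n) (hδpos n)
      _ = ∫⁻ θ in T, projL2sq θ μ := by
          rw [lintegral_const_mul' _ _ (hc3 n), ← mul_assoc,
            ENNReal.inv_mul_cancel (hc2 n) (hc3 n), one_mul]
  -- put it together
  calc (∫⁻ x, ∫⁻ y, Set.indicator {y | x - y ∈ coneOf I \ {0}}
        (fun y => ENNReal.ofReal ‖x - y‖⁻¹) y ∂μ ∂μ)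
      ≤ ∫⁻ x, ∫⁻ y, (atTop.liminf fun n => g n x y) ∂μ ∂μ :=
        lintegral_mono fun x => lintegral_mono fun y => hpt x y
    _ ≤ ∫⁻ x, atTop.liminf (fun n => ∫⁻ y, g n x y ∂μ) ∂μ :=
        lintegral_mono fun x => lintegral_liminf_le
          (fun n => (hgmeas n).comp (measurable_prodMk_left))
    _ ≤ atTop.liminf fun n => ∫⁻ x, ∫⁻ y, g n x y ∂μ ∂μ :=
        lintegral_liminf_le fun n => Measurable.lintegral_prod_right' (hgmeas n)
    _ ≤ ∫⁻ θ in T, projL2sq θ μ := by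
        refine le_trans (liminf_le_liminf (Eventually.of_forall keybound)) ?_
        rw [liminf_const]
end

section
/- Let 1 ≤ n ≤ d−1, let x ∈ ℝ^d ∖ {0}, and let A : ℝ^{d−1} → ℝ^d be a linear map with AᵀA = id whose image is the orthogonal complement of x. Then the map Ψ(V) = span(A(V) ∪ {x}) is a bijection from G(d−1, n−1) onto G_x = {V ∈ G(d,n) : x ∈ V}, and it is an isometry for the metric d(V,W) = ‖P_V − P_W‖: for all V, W ∈ G(d−1,n−1), ‖P_{ΨV} − P_{ΨW}‖_{ℝ^d→ℝ^d} = ‖P_V − P_W‖_{ℝ^{d−1}→ℝ^{d−1}}. -/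
open MeasureTheory Measure Set Filter Metric
open scoped ENNReal Real Topology Classical
open scoped RealInnerProductSpace

/-- The orthogonal projection onto a subspace `U` of a Euclidean space, viewed as a
continuous linear map of the ambient space into itself. -/
noncomputable def projCLM {d : ℕ} (U : Submodule ℝ (EuclideanSpace ℝ (Fin d))) :
    EuclideanSpace ℝ (Fin d) →L[ℝ] EuclideanSpace ℝ (Fin d) :=
  U.subtypeL.comp (U.orthogonalProjectionOnto)

section aux

variable {d e : ℕ} (A : EuclideanSpace ℝ (Fin e) →L[ℝ] EuclideanSpace ℝ (Fin d))

lemma aux_AtA (hA : (ContinuousLinearMap.adjoint A).comp A = ContinuousLinearMap.id ℝ _)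
    (v : EuclideanSpace ℝ (Fin e)) : ContinuousLinearMap.adjoint A (A v) = v := by
  have := congrArg (fun T : EuclideanSpace ℝ (Fin e) →L[ℝ] EuclideanSpace ℝ (Fin e) => T v) hA
  simpa using this

lemma aux_normA (hA : (ContinuousLinearMap.adjoint A).comp A = ContinuousLinearMap.id ℝ _)
    (v : EuclideanSpace ℝ (Fin e)) : ‖A v‖ = ‖v‖ := by
  have h2 : ⟪A v, A v⟫ = ⟪v, v⟫ := by
    rw [← ContinuousLinearMap.adjoint_inner_right, aux_AtA A hA]
  have := congrArg Real.sqrt h2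
  rwa [real_inner_self_eq_norm_sq, real_inner_self_eq_norm_sq, Real.sqrt_sq (norm_nonneg _),
    Real.sqrt_sq (norm_nonneg _)] at this

lemma aux_injA (hA : (ContinuousLinearMap.adjoint A).comp A = ContinuousLinearMap.id ℝ _) :
    Function.Injective A :=
  Function.LeftInverse.injective (g := ContinuousLinearMap.adjoint A) (aux_AtA A hA)

lemma aux_normAt (hA : (ContinuousLinearMap.adjoint A).comp A = ContinuousLinearMap.id ℝ _)
    (w : EuclideanSpace ℝ (Fin d)) : ‖ContinuousLinearMap.adjoint A w‖ ≤ ‖w‖ := by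
  by_cases h : ContinuousLinearMap.adjoint A w = 0
  · simp [h]
  have h1 : ‖ContinuousLinearMap.adjoint A w‖ ^ 2 ≤ ‖ContinuousLinearMap.adjoint A w‖ * ‖w‖ := by
    have : ⟪ContinuousLinearMap.adjoint A w, ContinuousLinearMap.adjoint A w⟫
        = ⟪A (ContinuousLinearMap.adjoint A w), w⟫ := by
      rw [ContinuousLinearMap.adjoint_inner_right]
    calc ‖ContinuousLinearMap.adjoint A w‖ ^ 2
        = ⟪A (ContinuousLinearMap.adjoint A w), w⟫ := by
          rw [← this, real_inner_self_eq_norm_sq]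
      _ ≤ ‖A (ContinuousLinearMap.adjoint A w)‖ * ‖w‖ := real_inner_le_norm _ _
      _ = ‖ContinuousLinearMap.adjoint A w‖ * ‖w‖ := by rw [aux_normA A hA]
  have hpos : 0 < ‖ContinuousLinearMap.adjoint A w‖ := norm_pos_iff.2 h
  rw [sq] at h1
  exact le_of_mul_le_mul_left h1 hpos

lemma aux_norm_conj (hA : (ContinuousLinearMap.adjoint A).comp A = ContinuousLinearMap.id ℝ _)
    (T : EuclideanSpace ℝ (Fin e) →L[ℝ] EuclideanSpace ℝ (Fin e)) :
    ‖A.comp (T.comp (ContinuousLinearMap.adjoint A))‖ = ‖T‖ := by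
  refine le_antisymm ?_ ?_
  · refine ContinuousLinearMap.opNorm_le_bound _ (norm_nonneg T) fun v => ?_
    calc ‖(A.comp (T.comp (ContinuousLinearMap.adjoint A))) v‖
        = ‖T (ContinuousLinearMap.adjoint A v)‖ := by
          simp [ContinuousLinearMap.comp_apply, aux_normA A hA]
      _ ≤ ‖T‖ * ‖ContinuousLinearMap.adjoint A v‖ := T.le_opNorm _
      _ ≤ ‖T‖ * ‖v‖ := by
          exact mul_le_mul_of_nonneg_left (aux_normAt A hA v) (norm_nonneg T)
  · have hrec : (ContinuousLinearMap.adjoint A).comp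
        ((A.comp (T.comp (ContinuousLinearMap.adjoint A))).comp A) = T := by
      ext v
      simp [ContinuousLinearMap.comp_apply, aux_AtA A hA]
    calc ‖T‖ = ‖(ContinuousLinearMap.adjoint A).comp
          ((A.comp (T.comp (ContinuousLinearMap.adjoint A))).comp A)‖ := by rw [hrec]
      _ ≤ 1 * (‖A.comp (T.comp (ContinuousLinearMap.adjoint A))‖ * 1) := by
          refine le_trans (ContinuousLinearMap.opNorm_comp_le _ _) ?_
          refine mul_le_mul ?_ (le_trans (ContinuousLinearMap.opNorm_comp_le _ _) ?_)
            (norm_nonneg _) zero_le_one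
          · exact ContinuousLinearMap.opNorm_le_bound _ zero_le_one fun w => by
              simpa using aux_normAt A hA w
          · refine mul_le_mul_of_nonneg_left ?_ (norm_nonneg _)
            exact ContinuousLinearMap.opNorm_le_bound _ zero_le_one fun w => by
              simp [aux_normA A hA]
      _ = ‖A.comp (T.comp (ContinuousLinearMap.adjoint A))‖ := by ring

variable (x : EuclideanSpace ℝ (Fin d))

lemma aux_At_x (hrange : LinearMap.range (A : EuclideanSpace ℝ (Fin e) →ₗ[ℝ]
      EuclideanSpace ℝ (Fin d)) = (Submodule.span ℝ {x})ᗮ)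
    {y : EuclideanSpace ℝ (Fin d)} (hy : y ∈ Submodule.span ℝ {x}) :
    ContinuousLinearMap.adjoint A y = 0 := by
  rw [← inner_self_eq_zero (𝕜 := ℝ)]
  rw [ContinuousLinearMap.adjoint_inner_left]
  have hmem : A (ContinuousLinearMap.adjoint A y) ∈ (Submodule.span ℝ {x})ᗮ := by
    rw [← hrange]; exact ⟨_, rfl⟩
  exact hmem y hy

lemma aux_proj_formula (hA : (ContinuousLinearMap.adjoint A).comp A = ContinuousLinearMap.id ℝ _)
    (hrange : LinearMap.range (A : EuclideanSpace ℝ (Fin e) →ₗ[ℝ]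
      EuclideanSpace ℝ (Fin d)) = (Submodule.span ℝ {x})ᗮ)
    (V : Submodule ℝ (EuclideanSpace ℝ (Fin e))) :
    projCLM (Submodule.map (A : EuclideanSpace ℝ (Fin e) →ₗ[ℝ] EuclideanSpace ℝ (Fin d)) V
        ⊔ Submodule.span ℝ {x})
      = A.comp ((projCLM V).comp (ContinuousLinearMap.adjoint A))
        + projCLM (Submodule.span ℝ {x}) := by
  set K := Submodule.map (A : EuclideanSpace ℝ (Fin e) →ₗ[ℝ] EuclideanSpace ℝ (Fin d)) V
      ⊔ Submodule.span ℝ {x} with hK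
  refine ContinuousLinearMap.ext fun v => ?_
  show (K.orthogonalProjectionOnto v : EuclideanSpace ℝ (Fin d)) = _
  refine Submodule.eq_starProjection_of_mem_of_inner_eq_zero ?_ ?_
  · refine Submodule.add_mem _ (Submodule.mem_sup_left ?_) (Submodule.mem_sup_right ?_)
    · exact ⟨_, (V.orthogonalProjectionOnto (ContinuousLinearMap.adjoint A v)).2, rfl⟩
    · exact ((Submodule.span ℝ {x}).orthogonalProjectionOnto v).2
  · intro w hw
    rcases Submodule.mem_sup.1 hw with ⟨a, ha, b, hb, rfl⟩
    rw [inner_add_right]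
    have hAz : ∀ z : EuclideanSpace ℝ (Fin e), ∀ c ∈ Submodule.span ℝ {x}, ⟪A z, c⟫ = 0 := by
      intro z c hc
      have hmem : A z ∈ (Submodule.span ℝ {x})ᗮ := by rw [← hrange]; exact ⟨z, rfl⟩
      rw [real_inner_comm]
      exact hmem c hc
    have claimB : ∀ c ∈ Submodule.span ℝ {x},
        ⟪v - ((A.comp ((projCLM V).comp (ContinuousLinearMap.adjoint A))
          + projCLM (Submodule.span ℝ {x})) v), c⟫ = 0 := by
      intro c hc
      have h1 : ⟪v - (projCLM (Submodule.span ℝ {x})) v, c⟫ = 0 :=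
        Submodule.starProjection_inner_eq_zero v c hc
      have h2 : ⟪A ((projCLM V) (ContinuousLinearMap.adjoint A v)), c⟫ = 0 := hAz _ c hc
      simp only [ContinuousLinearMap.add_apply, ContinuousLinearMap.comp_apply]
      rw [show v - (A ((projCLM V) (ContinuousLinearMap.adjoint A v))
          + (projCLM (Submodule.span ℝ {x})) v)
        = (v - (projCLM (Submodule.span ℝ {x})) v)
          - A ((projCLM V) (ContinuousLinearMap.adjoint A v)) by abel]
      rw [inner_sub_left, h1, h2, sub_zero]
    have claimA : ⟪v - ((A.comp ((projCLM V).comp (ContinuousLinearMap.adjoint A))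
        + projCLM (Submodule.span ℝ {x})) v), a⟫ = 0 := by
      rcases ha with ⟨u, hu, rfl⟩
      rw [ContinuousLinearMap.coe_coe, ← ContinuousLinearMap.adjoint_inner_left]
      have hsimp : ContinuousLinearMap.adjoint A
          (v - ((A.comp ((projCLM V).comp (ContinuousLinearMap.adjoint A))
            + projCLM (Submodule.span ℝ {x})) v))
          = ContinuousLinearMap.adjoint A v
            - (projCLM V) (ContinuousLinearMap.adjoint A v) := by
        have hx0 : ContinuousLinearMap.adjoint A ((projCLM (Submodule.span ℝ {x})) v) = 0 :=
          aux_At_x A x hrange ((Submodule.span ℝ {x}).orthogonalProjectionOnto v).2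
        simp only [ContinuousLinearMap.add_apply, ContinuousLinearMap.comp_apply, map_sub]
        rw [(ContinuousLinearMap.adjoint A).map_add, hx0, add_zero, aux_AtA A hA]
      rw [hsimp]
      exact Submodule.starProjection_inner_eq_zero _ _ hu
    rw [claimA, claimB b hb, add_zero]

end aux

/-- Let `1 ≤ n ≤ d-1`, `x ∈ ℝ^d \ {0}`, and let `A : ℝ^{d-1} → ℝ^d` be a
linear isometry (`AᵀA = id`) with range the orthogonal complement of `x`. Then
`Ψ(V) = span(A(V) ∪ {x})` is a bijection from `G(d-1, n-1)` onto `G_x = {V ∈ G(d,n) : x ∈ V}`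
and it is an isometry for the metric `d(V,W) = ‖P_V - P_W‖`. -/
theorem statement12 (d n : ℕ) (hn : 1 ≤ n) (hnd : n ≤ d - 1)
    (x : EuclideanSpace ℝ (Fin d)) (hx : x ≠ 0)
    (A : EuclideanSpace ℝ (Fin (d - 1)) →L[ℝ] EuclideanSpace ℝ (Fin d))
    (hA : (ContinuousLinearMap.adjoint A).comp A = ContinuousLinearMap.id ℝ _)
    (hrange : LinearMap.range (A : EuclideanSpace ℝ (Fin (d - 1)) →ₗ[ℝ] EuclideanSpace ℝ (Fin d))
      = (Submodule.span ℝ {x})ᗮ) :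
    Set.BijOn
        (fun V : Submodule ℝ (EuclideanSpace ℝ (Fin (d - 1))) =>
          Submodule.map (A : EuclideanSpace ℝ (Fin (d - 1)) →ₗ[ℝ] EuclideanSpace ℝ (Fin d)) V
            ⊔ Submodule.span ℝ {x})
        {V : Submodule ℝ (EuclideanSpace ℝ (Fin (d - 1))) | Module.finrank ℝ V = n - 1}
        {W : Submodule ℝ (EuclideanSpace ℝ (Fin d)) | Module.finrank ℝ W = n ∧ x ∈ W} ∧
      ∀ V W : Submodule ℝ (EuclideanSpace ℝ (Fin (d - 1))),
        Module.finrank ℝ V = n - 1 → Module.finrank ℝ W = n - 1 →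
        ‖projCLM (Submodule.map (A : EuclideanSpace ℝ (Fin (d - 1)) →ₗ[ℝ]
              EuclideanSpace ℝ (Fin d)) V ⊔ Submodule.span ℝ {x})
          - projCLM (Submodule.map (A : EuclideanSpace ℝ (Fin (d - 1)) →ₗ[ℝ]
              EuclideanSpace ℝ (Fin d)) W ⊔ Submodule.span ℝ {x})‖
          = ‖projCLM V - projCLM W‖ := by
  have hinj : Function.Injective A := aux_injA A hA
  have hinjL : Function.Injective
      (A : EuclideanSpace ℝ (Fin (d - 1)) →ₗ[ℝ] EuclideanSpace ℝ (Fin d)) := hinj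
  -- finrank of map A V
  have hfrmap : ∀ V : Submodule ℝ (EuclideanSpace ℝ (Fin (d - 1))),
      Module.finrank ℝ (Submodule.map
        (A : EuclideanSpace ℝ (Fin (d - 1)) →ₗ[ℝ] EuclideanSpace ℝ (Fin d)) V)
      = Module.finrank ℝ V := by
    intro V
    exact (LinearEquiv.finrank_eq (Submodule.equivMapOfInjective _ hinjL V)).symm
  have hdisj : ∀ V : Submodule ℝ (EuclideanSpace ℝ (Fin (d - 1))),
      Submodule.map (A : EuclideanSpace ℝ (Fin (d - 1)) →ₗ[ℝ] EuclideanSpace ℝ (Fin d)) V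
        ⊓ Submodule.span ℝ {x} = ⊥ := by
    intro V
    have hle : Submodule.map (A : EuclideanSpace ℝ (Fin (d - 1)) →ₗ[ℝ]
        EuclideanSpace ℝ (Fin d)) V ≤ (Submodule.span ℝ {x})ᗮ := by
      rw [← hrange]; exact LinearMap.map_le_range
    exact disjoint_iff.1
      (((Submodule.orthogonal_disjoint (Submodule.span ℝ {x})).symm).mono_left hle)
  have hxspan : Module.finrank ℝ (Submodule.span ℝ {x}) = 1 := finrank_span_singleton hx
  have hfrsup : ∀ V : Submodule ℝ (EuclideanSpace ℝ (Fin (d - 1))),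
      Module.finrank ℝ ↥(Submodule.map (A : EuclideanSpace ℝ (Fin (d - 1)) →ₗ[ℝ]
        EuclideanSpace ℝ (Fin d)) V ⊔ Submodule.span ℝ {x})
      = Module.finrank ℝ V + 1 := by
    intro V
    have := Submodule.finrank_sup_add_finrank_inf_eq
      (Submodule.map (A : EuclideanSpace ℝ (Fin (d - 1)) →ₗ[ℝ] EuclideanSpace ℝ (Fin d)) V)
      (Submodule.span ℝ {x})
    rw [hdisj V, hxspan, hfrmap V] at this
    simpa using this
  -- recovery : (map A V ⊔ span x) ⊓ xᗮ = map A V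
  have hrec : ∀ V : Submodule ℝ (EuclideanSpace ℝ (Fin (d - 1))),
      (Submodule.map (A : EuclideanSpace ℝ (Fin (d - 1)) →ₗ[ℝ] EuclideanSpace ℝ (Fin d)) V
        ⊔ Submodule.span ℝ {x}) ⊓ (Submodule.span ℝ {x})ᗮ
      = Submodule.map (A : EuclideanSpace ℝ (Fin (d - 1)) →ₗ[ℝ] EuclideanSpace ℝ (Fin d)) V := by
    intro V
    have hle : Submodule.map (A : EuclideanSpace ℝ (Fin (d - 1)) →ₗ[ℝ]
        EuclideanSpace ℝ (Fin d)) V ≤ (Submodule.span ℝ {x})ᗮ := by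
      rw [← hrange]; exact LinearMap.map_le_range
    rw [sup_inf_assoc_of_le _ hle,
      disjoint_iff.1 (Submodule.span ℝ {x}).orthogonal_disjoint, sup_bot_eq]
  refine ⟨⟨?_, ?_, ?_⟩, ?_⟩
  · -- maps into
    intro V hV
    constructor
    · rw [hfrsup V, hV]
      omega
    · exact Submodule.mem_sup_right (Submodule.mem_span_singleton_self x)
  · -- injOn
    intro V hV W hW hVW
    have h1 := congrArg (fun K => K ⊓ (Submodule.span ℝ {x})ᗮ) hVW
    simp only [hrec V, hrec W] at h1
    exact Submodule.map_injective_of_injective hinjL h1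
  · -- surjOn
    intro W hW
    obtain ⟨hWn, hxW⟩ := hW
    have hxle : Submodule.span ℝ {x} ≤ W := Submodule.span_le.2 (by simpa using hxW)
    set U : Submodule ℝ (EuclideanSpace ℝ (Fin d)) := (Submodule.span ℝ {x})ᗮ ⊓ W with hU
    have hWdec : Submodule.span ℝ {x} ⊔ U = W :=
      Submodule.sup_orthogonal_inf_of_hasOrthogonalProjection hxle
    have hUle : U ≤ LinearMap.range
        (A : EuclideanSpace ℝ (Fin (d - 1)) →ₗ[ℝ] EuclideanSpace ℝ (Fin d)) := by
      rw [hrange]; exact inf_le_left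
    set V : Submodule ℝ (EuclideanSpace ℝ (Fin (d - 1))) :=
      Submodule.comap (A : EuclideanSpace ℝ (Fin (d - 1)) →ₗ[ℝ] EuclideanSpace ℝ (Fin d)) U
      with hVdef
    have hmapV : Submodule.map
        (A : EuclideanSpace ℝ (Fin (d - 1)) →ₗ[ℝ] EuclideanSpace ℝ (Fin d)) V = U :=
      Submodule.map_comap_eq_self hUle
    have hVfr : Module.finrank ℝ V = n - 1 := by
      have h1 : Module.finrank ℝ V = Module.finrank ℝ U := by
        rw [← hmapV]; exact (hfrmap V).symm
      have h2 := Submodule.finrank_sup_add_finrank_inf_eq (Submodule.span ℝ {x}) U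
      have h3 : Submodule.span ℝ {x} ⊓ U = ⊥ := by
        have := (Submodule.orthogonal_disjoint (Submodule.span ℝ {x})).mono_right
          (inf_le_left : U ≤ (Submodule.span ℝ {x})ᗮ)
        exact disjoint_iff.1 this
      rw [hWdec, h3, hxspan, hWn] at h2
      simp at h2
      omega
    refine ⟨V, hVfr, ?_⟩
    show Submodule.map (A : EuclideanSpace ℝ (Fin (d - 1)) →ₗ[ℝ] EuclideanSpace ℝ (Fin d)) V
        ⊔ Submodule.span ℝ {x} = W
    rw [hmapV, sup_comm, hWdec]
  · -- isometry
    intro V W hV hW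
    rw [aux_proj_formula A x hA hrange V, aux_proj_formula A x hA hrange W]
    have : A.comp ((projCLM V).comp (ContinuousLinearMap.adjoint A))
          + projCLM (Submodule.span ℝ {x})
        - (A.comp ((projCLM W).comp (ContinuousLinearMap.adjoint A))
          + projCLM (Submodule.span ℝ {x}))
        = A.comp (((projCLM V) - (projCLM W)).comp (ContinuousLinearMap.adjoint A)) := by
      ext v
      simp [ContinuousLinearMap.comp_apply, ContinuousLinearMap.sub_apply, map_sub]
    rw [this, aux_norm_conj A hA]
end

section
/- Let E ⊂ ℂ be compact, let I ⊂ [0,π) be an interval with ℋ¹(I) > 0, and let μ be a finite Borel measure supported on E with 0 < ∫_I ‖P_θμ‖₂² dθ < ∞. Set λ = (1/μ(E)) ∫_I ‖P_θμ‖₂² dθ. Then there exists a compact set F ⊂ E such that the measure σ = (ℋ¹(I)/(4λ)) · μ|_F satisfies: σ(B(x,r)) ≤ r for all x ∈ ℂ and r > 0; σ(F) ≥ (ℋ¹(I)/(16λ)) μ(E); and ∫_I ‖P_θσ‖₂² dθ ≤ ℋ¹(I) · σ(F). -/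
open MeasureTheory Measure Set Filter Metric
open scoped ENNReal Real Topology Classical

namespace Statement16Aux

lemma projCoord_lipschitz (θ : ℝ) : LipschitzWith 1 (projCoord θ) := by
  refine LipschitzWith.of_dist_le_mul fun z w => ?_
  have h : projCoord θ z - projCoord θ w
      = ((z - w) * Complex.exp (-(θ : ℂ) * Complex.I)).re := by
    simp [projCoord, sub_mul]
  rw [Real.dist_eq, h, NNReal.coe_one, one_mul, Complex.dist_eq]
  calc |((z - w) * Complex.exp (-(θ : ℂ) * Complex.I)).re|
      ≤ ‖(z - w) * Complex.exp (-(θ : ℂ) * Complex.I)‖ := Complex.abs_re_le_norm _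
    _ = ‖z - w‖ * ‖Complex.exp (-(θ : ℂ) * Complex.I)‖ := norm_mul _ _
    _ = ‖z - w‖ := by
        rw [show -(θ : ℂ) * Complex.I = ((-θ : ℝ) : ℂ) * Complex.I by push_cast; ring,
          Complex.norm_exp_ofReal_mul_I, mul_one]

lemma projCoord_measurable (θ : ℝ) : Measurable (projCoord θ) :=
  Complex.measurable_re.comp (measurable_id.mul_const _)

lemma rnDeriv_mono_of_le {m1 m2 : Measure ℝ} [IsFiniteMeasure m2] (h : m1 ≤ m2) :
    m1.rnDeriv volume ≤ᵐ[volume] m2.rnDeriv volume := by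
  haveI : IsFiniteMeasure m1 := isFiniteMeasure_of_le m2 h
  haveI : IsFiniteMeasure (m2 - m1) := isFiniteMeasure_of_le m2 Measure.sub_le
  have h1 : m2 - m1 + m1 = m2 := Measure.sub_add_cancel_of_le h
  have h2 := Measure.rnDeriv_add (m2 - m1) m1 volume
  rw [h1] at h2
  filter_upwards [h2] with t ht
  rw [ht, Pi.add_apply]
  exact le_add_self

lemma projL2sq_mono (θ : ℝ) {ν μ : Measure ℂ} [IsFiniteMeasure μ] (h : ν ≤ μ) :
    projL2sq θ ν ≤ projL2sq θ μ := by
  by_cases hac : (μ.map (projCoord θ)) ≪ (volume : Measure ℝ)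
  · have hle : ν.map (projCoord θ) ≤ μ.map (projCoord θ) :=
      Measure.map_mono h (projCoord_measurable θ)
    have hacν : (ν.map (projCoord θ)) ≪ (volume : Measure ℝ) :=
      (Measure.absolutelyContinuous_of_le hle).trans hac
    haveI : IsFiniteMeasure (μ.map (projCoord θ)) :=
      Measure.isFiniteMeasure_map μ _
    simp only [projL2sq]
    rw [dif_pos hacν, dif_pos hac]
    refine lintegral_mono_ae ?_
    filter_upwards [rnDeriv_mono_of_le hle] with t ht
    exact pow_le_pow_left' ht 2
  · simp only [projL2sq]
    rw [dif_neg hac]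
    exact le_top

lemma projL2sq_smul (θ : ℝ) (ν : Measure ℂ) [IsFiniteMeasure ν] {c : ℝ≥0∞}
    (hc0 : c ≠ 0) (hct : c ≠ ⊤) :
    projL2sq θ (c • ν) = c ^ 2 * projL2sq θ ν := by
  have hmap : (c • ν).map (projCoord θ) = c • (ν.map (projCoord θ)) :=
    Measure.map_smul c ν _
  by_cases h : (ν.map (projCoord θ)) ≪ (volume : Measure ℝ)
  · have h2 : ((c • ν).map (projCoord θ)) ≪ (volume : Measure ℝ) := by
      rw [hmap]; exact h.smul_left c
    haveI : IsFiniteMeasure (ν.map (projCoord θ)) := Measure.isFiniteMeasure_map ν _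
    simp only [projL2sq]
    rw [dif_pos h2, dif_pos h]
    have hrn : ((c • ν).map (projCoord θ)).rnDeriv volume
        =ᵐ[volume] c • (ν.map (projCoord θ)).rnDeriv volume := by
      rw [hmap]
      exact Measure.rnDeriv_smul_left_of_ne_top (ν.map (projCoord θ)) volume hct
    have : (∫⁻ r, ((c • ν).map (projCoord θ)).rnDeriv volume r ^ 2)
        = ∫⁻ r, c ^ 2 * ((ν.map (projCoord θ)).rnDeriv volume r) ^ 2 := by
      refine lintegral_congr_ae ?_
      filter_upwards [hrn] with t ht
      rw [ht, Pi.smul_apply, smul_eq_mul, mul_pow]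
    rw [this, lintegral_const_mul' _ _ (ENNReal.pow_ne_top hct)]
  · have h2 : ¬ ((c • ν).map (projCoord θ)) ≪ (volume : Measure ℝ) := by
      rw [hmap]
      intro hcon
      refine h fun s hs => ?_
      have := hcon hs
      rw [Measure.smul_apply, smul_eq_mul] at this
      exact (mul_eq_zero.1 this).resolve_left hc0
    simp only [projL2sq]
    rw [dif_neg h2, dif_neg h, ENNReal.mul_top (pow_ne_zero 2 hc0)]


lemma sq_rpow (a : ℝ≥0∞) : a ^ (2:ℝ) = a * a := by
  rw [show (2:ℝ) = ((2:ℕ):ℝ) by norm_num, ENNReal.rpow_natCast, pow_two]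

lemma key_step (μ : Measure ℂ) [IsFiniteMeasure μ] (θ : ℝ) {K : ℝ≥0∞} {G : Set ℂ}
    (hG : MeasurableSet G) {x : ℂ} {r : ℝ} (hr : 0 < r) (hsub : G ⊆ Metric.closedBall x r)
    (hbad : K * ENNReal.ofReal r ≤ μ G)
    (hac : (μ.map (projCoord θ)) ≪ (volume : Measure ℝ)) :
    K * μ G ≤ 2 * ∫⁻ z in G, (μ.map (projCoord θ)).rnDeriv volume (projCoord θ z) ∂μ := by
  set p := projCoord θ with hp
  have hpm : Measurable p := projCoord_measurable θ
  set ν := μ.map p with hν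
  set f := ν.rnDeriv volume with hf
  have hfm : Measurable f := Measure.measurable_rnDeriv _ _
  set νG := (μ.restrict G).map p with hνG
  set g := νG.rnDeriv volume with hg
  have hgm : Measurable g := Measure.measurable_rnDeriv _ _
  haveI : IsFiniteMeasure ν := Measure.isFiniteMeasure_map μ _
  haveI : IsFiniteMeasure νG := Measure.isFiniteMeasure_map _ _
  have hle : νG ≤ ν := Measure.map_mono Measure.restrict_le_self hpm
  have hacG : νG ≪ (volume : Measure ℝ) := (Measure.absolutelyContinuous_of_le hle).trans hac
  have hgf : g ≤ᵐ[volume] f := rnDeriv_mono_of_le hle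
  set J := Metric.closedBall (p x) r with hJ
  have hJm : MeasurableSet J := measurableSet_closedBall
  have hvolJ : volume J = ENNReal.ofReal (2 * r) := Real.volume_closedBall _ _
  -- νG is carried by J
  have hcar : νG Jᶜ = 0 := by
    rw [hνG, Measure.map_apply hpm hJm.compl, Measure.restrict_apply (hpm hJm.compl)]
    have : p ⁻¹' Jᶜ ∩ G = ∅ := by
      ext z
      simp only [mem_inter_iff, mem_preimage, mem_compl_iff, mem_empty_iff_false, iff_false,
        not_and]
      intro hzJ hzG
      refine hzJ ?_
      have h1 : dist (p z) (p x) ≤ dist z x := by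
        simpa using (projCoord_lipschitz θ).dist_le_mul z x
      exact mem_closedBall.2 (h1.trans (mem_closedBall.1 (hsub hzG)))
    rw [this, measure_empty]
  have hμG : μ G = ∫⁻ t in J, g t := by
    have h1 : νG Set.univ = μ G := by
      rw [hνG, Measure.map_apply hpm MeasurableSet.univ, Set.preimage_univ,
        Measure.restrict_apply_univ]
    have h2 : νG Set.univ = νG J := by
      rw [← Set.union_compl_self J, measure_union disjoint_compl_right hJm.compl, hcar, add_zero]
    rw [← h1, h2]
    exact (Measure.setLIntegral_rnDeriv hacG J).symm
  -- Cauchy-Schwarz on J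
  have hconj : Real.HolderConjugate 2 2 := Real.HolderConjugate.two_two
  have hCS : (∫⁻ t in J, g t) ≤
      (∫⁻ t in J, g t ^ (2:ℝ)) ^ (1/2:ℝ) * (volume J) ^ (1/2:ℝ) := by
    have h := ENNReal.lintegral_mul_le_Lp_mul_Lq (volume.restrict J) hconj
      hgm.aemeasurable (aemeasurable_const (b := (1:ℝ≥0∞)))
    simp only [Pi.mul_apply, mul_one, ENNReal.one_rpow, setLIntegral_one] at h
    simpa using h
  set A := ∫⁻ t in J, g t ^ (2:ℝ) with hA
  have hsq : μ G * μ G ≤ A * volume J := by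
    calc μ G * μ G ≤ (A ^ (1/2:ℝ) * (volume J) ^ (1/2:ℝ)) * (A ^ (1/2:ℝ) * (volume J) ^ (1/2:ℝ)) := by
          rw [hμG]; exact mul_le_mul' hCS hCS
      _ = (A ^ (1/2:ℝ) * A ^ (1/2:ℝ)) * ((volume J) ^ (1/2:ℝ) * (volume J) ^ (1/2:ℝ)) := by ring
      _ = A * volume J := by
          rw [← ENNReal.rpow_add_of_nonneg _ _ (by norm_num) (by norm_num)]
          rw [← ENNReal.rpow_add_of_nonneg _ _ (by norm_num) (by norm_num)]
          norm_num
  -- A ≤ ∫ g * f = ∫_G f ∘ p dμ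
  have hA_le : A ≤ ∫⁻ z in G, f (p z) ∂μ := by
    have h1 : A ≤ ∫⁻ t, g t * g t := by
      rw [hA]
      calc ∫⁻ t in J, g t ^ (2:ℝ) ≤ ∫⁻ t, g t ^ (2:ℝ) :=
            lintegral_mono' Measure.restrict_le_self le_rfl
        _ = ∫⁻ t, g t * g t := by simp only [sq_rpow]
    have h2 : (∫⁻ t, g t * g t) ≤ ∫⁻ t, g t * f t := by
      refine lintegral_mono_ae ?_
      filter_upwards [hgf] with t ht
      exact mul_le_mul_right ht _
    have h3 : (∫⁻ t, g t * f t) = ∫⁻ z in G, f (p z) ∂μ := by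
      have hwd : volume.withDensity g = νG := Measure.withDensity_rnDeriv_eq _ _ hacG
      calc (∫⁻ t, g t * f t) = ∫⁻ t, f t ∂(volume.withDensity g) := by
            rw [lintegral_withDensity_eq_lintegral_mul volume hgm hfm]; rfl
        _ = ∫⁻ t, f t ∂νG := by rw [hwd]
        _ = ∫⁻ z, f (p z) ∂(μ.restrict G) := lintegral_map hfm hpm
        _ = ∫⁻ z in G, f (p z) ∂μ := rfl
    exact h1.trans (h2.trans (le_of_eq h3))
  -- combine
  have hr0 : ENNReal.ofReal r ≠ 0 := by simp [hr]
  have hrt : ENNReal.ofReal r ≠ ⊤ := ENNReal.ofReal_ne_top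
  have hmain : (K * μ G) * ENNReal.ofReal r ≤ (2 * ∫⁻ z in G, f (p z) ∂μ) * ENNReal.ofReal r := by
    calc (K * μ G) * ENNReal.ofReal r = (K * ENNReal.ofReal r) * μ G := by ring
      _ ≤ μ G * μ G := mul_le_mul_left hbad _
      _ ≤ A * volume J := hsq
      _ ≤ (∫⁻ z in G, f (p z) ∂μ) * ENNReal.ofReal (2 * r) := by
          rw [hvolJ]; exact mul_le_mul_left hA_le _
      _ = (2 * ∫⁻ z in G, f (p z) ∂μ) * ENNReal.ofReal r := by
          rw [ENNReal.ofReal_mul (by norm_num : (0:ℝ) ≤ 2)]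
          rw [show ENNReal.ofReal 2 = 2 by simp]
          ring
  exact (ENNReal.mul_le_mul_iff_left hr0 hrt).1 hmain


lemma key_sum (μ : Measure ℂ) [IsFiniteMeasure μ] (θ : ℝ) {K : ℝ≥0∞} (n : ℕ)
    (G : ℕ → Set ℂ) (hGm : ∀ k, MeasurableSet (G k))
    (hdisj : ∀ i j, i ≠ j → Disjoint (G i) (G j))
    (hprop : ∀ k, G k = ∅ ∨ ∃ q : ℂ × ℝ, 0 < q.2 ∧ G k ⊆ Metric.closedBall q.1 q.2 ∧
      K * ENNReal.ofReal q.2 ≤ μ (G k)) :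
    K * ∑ k ∈ Finset.range n, μ (G k) ≤ 2 * projL2sq θ μ := by
  by_cases hac : (μ.map (projCoord θ)) ≪ (volume : Measure ℝ)
  · set p := projCoord θ with hp
    have hpm : Measurable p := projCoord_measurable θ
    set f := (μ.map p).rnDeriv volume with hf
    have hfm : Measurable f := Measure.measurable_rnDeriv _ _
    set F := fun z => f (p z) with hF
    have hFm : Measurable F := hfm.comp hpm
    have hstep : ∀ k, K * μ (G k) ≤ 2 * ∫⁻ z in G k, F z ∂μ := by
      intro k
      rcases hprop k with h | ⟨q, hq1, hq2, hq3⟩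
      · simp [h]
      · exact key_step μ θ (hGm k) hq1 hq2 hq3 hac
    have hsum1 : K * ∑ k ∈ Finset.range n, μ (G k)
        ≤ 2 * ∑ k ∈ Finset.range n, ∫⁻ z in G k, F z ∂μ := by
      rw [Finset.mul_sum, Finset.mul_sum]
      exact Finset.sum_le_sum fun k _ => hstep k
    have hsum2 : (∑ k ∈ Finset.range n, ∫⁻ z in G k, F z ∂μ) ≤ ∫⁻ z, F z ∂μ := by
      have h1 : ∀ k ∈ Finset.range n, (∫⁻ z in G k, F z ∂μ) = ∫⁻ z, (G k).indicator F z ∂μ :=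
        fun k _ => (lintegral_indicator (hGm k) F).symm
      rw [Finset.sum_congr rfl h1, ← lintegral_finset_sum _ (fun k _ => hFm.indicator (hGm k))]
      refine lintegral_mono fun z => ?_
      by_cases hz : ∃ j ∈ Finset.range n, z ∈ G j
      · obtain ⟨j, hj, hzj⟩ := hz
        have he : ∑ k ∈ Finset.range n, (G k).indicator F z = (G j).indicator F z := by
          refine Finset.sum_eq_single_of_mem j hj fun k _ hkj => ?_
          exact Set.indicator_of_notMem
            (fun hzk => Set.disjoint_left.1 (hdisj k j hkj) hzk hzj) _
        rw [he, Set.indicator_of_mem hzj]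
      · push_neg at hz
        have he : ∑ k ∈ Finset.range n, (G k).indicator F z = 0 :=
          Finset.sum_eq_zero fun k hk => Set.indicator_of_notMem (hz k hk) F
        rw [he]
        exact zero_le
    have hint : (∫⁻ z, F z ∂μ) = projL2sq θ μ := by
      have h1 : (∫⁻ z, F z ∂μ) = ∫⁻ t, f t ∂(μ.map p) := (lintegral_map hfm hpm).symm
      have hwd : volume.withDensity f = μ.map p := Measure.withDensity_rnDeriv_eq _ _ hac
      have h2 : (∫⁻ t, f t ∂(μ.map p)) = ∫⁻ t, f t * f t := by
        rw [← hwd, lintegral_withDensity_eq_lintegral_mul volume hfm hfm]; rfl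
      simp only [projL2sq]
      rw [dif_pos hac, h1, h2]
      refine lintegral_congr fun t => ?_
      rw [pow_two]
    refine hsum1.trans ?_
    rw [← hint]
    exact mul_le_mul_right hsum2 2
  · have h : projL2sq θ μ = ⊤ := by simp only [projL2sq]; rw [dif_neg hac]
    rw [h, ENNReal.mul_top (by norm_num : (2:ℝ≥0∞) ≠ 0)]
    exact le_top


/-- A "bad pair": a closed ball on which the restriction of `μ` to `S` is too heavy. -/
def badPair (μ : Measure ℂ) (K : ℝ≥0∞) (S : Set ℂ) (q : ℂ × ℝ) : Prop :=
  0 < q.2 ∧ K * ENNReal.ofReal q.2 < μ (S ∩ Metric.closedBall q.1 q.2)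

lemma exists_good_pick (μ : Measure ℂ) [IsFiniteMeasure μ] (K : ℝ≥0∞) (S : Set ℂ)
    (h : ∃ q, badPair μ K S q) :
    ∃ q, badPair μ K S q ∧ ∀ q', badPair μ K S q' →
      μ (S ∩ Metric.closedBall q'.1 q'.2) ≤ 2 * μ (S ∩ Metric.closedBall q.1 q.2) := by
  set A := ⨆ q : {q // badPair μ K S q}, μ (S ∩ Metric.closedBall q.1.1 q.1.2) with hA
  have hAt : A ≠ ⊤ := by
    refine ne_top_of_le_ne_top (measure_ne_top μ Set.univ) ?_
    exact iSup_le fun q => measure_mono (Set.subset_univ _)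
  have hA0 : A ≠ 0 := by
    obtain ⟨q0, hq0⟩ := h
    have h1 : 0 < μ (S ∩ Metric.closedBall q0.1 q0.2) := lt_of_le_of_lt (zero_le) hq0.2
    have h2 : μ (S ∩ Metric.closedBall q0.1 q0.2) ≤ A :=
      le_iSup (fun q : {q // badPair μ K S q} => μ (S ∩ Metric.closedBall q.1.1 q.1.2)) ⟨q0, hq0⟩
    exact (lt_of_lt_of_le h1 h2).ne'
  have hhalf : A / 2 < A := ENNReal.half_lt_self hA0 hAt
  rw [hA, lt_iSup_iff] at hhalf
  obtain ⟨⟨q, hq⟩, hq2⟩ := hhalf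
  refine ⟨q, hq, fun q' hq' => ?_⟩
  have h1 : μ (S ∩ Metric.closedBall q'.1 q'.2) ≤ A :=
    le_iSup (fun q : {q // badPair μ K S q} => μ (S ∩ Metric.closedBall q.1.1 q.1.2)) ⟨q', hq'⟩
  have h2 : A ≤ 2 * μ (S ∩ Metric.closedBall q.1 q.2) := by
    have : A = 2 * (A / 2) := (ENNReal.mul_div_cancel (by norm_num) (by norm_num)).symm
    rw [this]
    exact mul_le_mul_right hq2.le _
  exact h1.trans h2

/-- One step of the greedy bad-ball removal. -/
noncomputable def stepSet (μ : Measure ℂ) [IsFiniteMeasure μ] (K : ℝ≥0∞) (S : Set ℂ) : Set ℂ :=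
  if h : ∃ q, badPair μ K S q then
    S \ Metric.closedBall (exists_good_pick μ K S h).choose.1 (exists_good_pick μ K S h).choose.2
  else S

/-- Iterated greedy removal. -/
noncomputable def seqSet (μ : Measure ℂ) [IsFiniteMeasure μ] (K : ℝ≥0∞) (E : Set ℂ) : ℕ → Set ℂ
  | 0 => E
  | n + 1 => stepSet μ K (seqSet μ K E n)

variable {μ : Measure ℂ} [IsFiniteMeasure μ] {K : ℝ≥0∞} {E : Set ℂ}

lemma stepSet_subset (S : Set ℂ) : stepSet μ K S ⊆ S := by
  rw [stepSet]
  split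
  · exact Set.diff_subset
  · exact le_rfl

lemma stepSet_measurable {S : Set ℂ} (hS : MeasurableSet S) : MeasurableSet (stepSet μ K S) := by
  rw [stepSet]
  split
  · exact hS.diff measurableSet_closedBall
  · exact hS

lemma seqSet_succ_subset (n : ℕ) : seqSet μ K E (n + 1) ⊆ seqSet μ K E n :=
  stepSet_subset _

lemma seqSet_antitone : ∀ {m n : ℕ}, m ≤ n → seqSet μ K E n ⊆ seqSet μ K E m := by
  intro m n h
  induction n with
  | zero => rw [Nat.le_zero.1 h]
  | succ n ih =>
    rcases Nat.lt_or_ge m (n + 1) with h' | h'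
    · exact (seqSet_succ_subset n).trans (ih (Nat.lt_succ_iff.1 h'))
    · rw [le_antisymm h h']

lemma seqSet_subset (n : ℕ) : seqSet μ K E n ⊆ E := seqSet_antitone (Nat.zero_le n)

lemma seqSet_measurable (hE : MeasurableSet E) (n : ℕ) : MeasurableSet (seqSet μ K E n) := by
  induction n with
  | zero => exact hE
  | succ n ih => exact stepSet_measurable ih

/-- The piece removed at step `n`. -/
def gSet (μ : Measure ℂ) [IsFiniteMeasure μ] (K : ℝ≥0∞) (E : Set ℂ) (n : ℕ) : Set ℂ :=
  seqSet μ K E n \ seqSet μ K E (n + 1)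

lemma gSet_measurable (hE : MeasurableSet E) (n : ℕ) : MeasurableSet (gSet μ K E n) :=
  (seqSet_measurable hE n).diff (seqSet_measurable hE (n + 1))

lemma gSet_disjoint : ∀ i j : ℕ, i ≠ j → Disjoint (gSet μ K E i) (gSet μ K E j) := by
  have key : ∀ i j : ℕ, i < j → Disjoint (gSet μ K E i) (gSet μ K E j) := by
    intro i j hij
    refine Set.disjoint_left.2 fun z hzi hzj => ?_
    have h1 : z ∈ seqSet μ K E j := hzj.1
    have h2 : z ∈ seqSet μ K E (i + 1) := seqSet_antitone hij h1
    exact hzi.2 h2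
  intro i j hij
  rcases lt_or_gt_of_ne hij with h | h
  · exact key i j h
  · exact (key j i h).symm

lemma gSet_prop (n : ℕ) : ((¬ ∃ q, badPair μ K (seqSet μ K E n) q) ∧ gSet μ K E n = ∅) ∨
    ∃ q : ℂ × ℝ, 0 < q.2 ∧ gSet μ K E n ⊆ Metric.closedBall q.1 q.2 ∧
      K * ENNReal.ofReal q.2 ≤ μ (gSet μ K E n) ∧
      ∀ q', badPair μ K (seqSet μ K E n) q' →
        μ (seqSet μ K E n ∩ Metric.closedBall q'.1 q'.2) ≤ 2 * μ (gSet μ K E n) := by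
  set S := seqSet μ K E n with hS
  have hstep : seqSet μ K E (n + 1) = stepSet μ K S := rfl
  by_cases h : ∃ q, badPair μ K S q
  · right
    obtain ⟨hq, hmax⟩ := (exists_good_pick μ K S h).choose_spec
    set q := (exists_good_pick μ K S h).choose with hqdef
    have hG : gSet μ K E n = S ∩ Metric.closedBall q.1 q.2 := by
      rw [gSet, hstep, stepSet, dif_pos h, Set.diff_diff_right_self]
    refine ⟨q, hq.1, ?_, ?_, ?_⟩
    · rw [hG]; exact Set.inter_subset_right
    · rw [hG]; exact hq.2.le
    · intro q' hq'
      rw [hG]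
      exact hmax q' hq'
  · left
    exact ⟨h, by rw [gSet, hstep, stepSet, dif_neg h, Set.diff_self]⟩


end Statement16Aux

open Statement16Aux

/-- Let `E ⊆ ℂ` be compact, `I ⊆ [0,π)` an interval with `ℋ¹(I) > 0`, and
`μ` a finite Borel measure on `E` with `0 < ∫_I ‖P_θ μ‖₂² dθ < ∞`. With
`λ = (∫_I ‖P_θ μ‖₂² dθ)/μ(E)`, there is a compact `F ⊆ E` so that
`σ = (ℋ¹(I)/(4λ))·μ|_F` has linear growth with constant 1, `σ(F) ≥ (ℋ¹(I)/(16λ)) μ(E)`, and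
`∫_I ‖P_θ σ‖₂² dθ ≤ ℋ¹(I)·σ(F)`. -/
theorem statement16 (E : Set ℂ) (hE : IsCompact E)
    (I : Set ℝ) (hIconn : I.OrdConnected) (hIsub : I ⊆ Set.Ico 0 π)
    (hIpos : 0 < (μH[1] : Measure ℝ) I)
    (μ : Measure ℂ) [IsFiniteMeasure μ] (hsupp : μ Eᶜ = 0)
    (hpos : 0 < ∫⁻ θ in I, projL2sq θ μ) (hfin : (∫⁻ θ in I, projL2sq θ μ) < ⊤) :
    ∃ F : Set ℂ, IsCompact F ∧ F ⊆ E ∧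
      (∀ x : ℂ, ∀ r : ℝ, 0 < r →
        (((μH[1] : Measure ℝ) I / (4 * ((∫⁻ θ in I, projL2sq θ μ) / μ E))) • μ.restrict F)
          (Metric.ball x r) ≤ ENNReal.ofReal r) ∧
      ((μH[1] : Measure ℝ) I / (16 * ((∫⁻ θ in I, projL2sq θ μ) / μ E))) * μ E
        ≤ (((μH[1] : Measure ℝ) I / (4 * ((∫⁻ θ in I, projL2sq θ μ) / μ E))) • μ.restrict F) F ∧
      (∫⁻ θ in I, projL2sq θ
          (((μH[1] : Measure ℝ) I / (4 * ((∫⁻ θ in I, projL2sq θ μ) / μ E))) • μ.restrict F))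
        ≤ (μH[1] : Measure ℝ) I *
          (((μH[1] : Measure ℝ) I / (4 * ((∫⁻ θ in I, projL2sq θ μ) / μ E))) • μ.restrict F) F := by
  classical
  have hH : (μH[1] : Measure ℝ) = (volume : Measure ℝ) := MeasureTheory.hausdorffMeasure_real
  rw [hH] at hIpos ⊢
  set T := ∫⁻ θ in I, projL2sq θ μ with hT
  set L := (volume : Measure ℝ) I with hL
  have hEmeas : MeasurableSet E := hE.isClosed.measurableSet
  -- μ E is positive and finite
  have hE0 : μ E ≠ 0 := by
    intro h0
    have hzero : μ = 0 := by
      have huniv : μ Set.univ = 0 := by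
        have h1 : μ Set.univ ≤ μ E + μ Eᶜ := by
          rw [← Set.union_compl_self E]
          exact measure_union_le _ _
        rw [h0, hsupp, add_zero] at h1
        exact le_antisymm h1 (zero_le)
      exact measure_univ_eq_zero.mp huniv
    have hz : ∀ θ : ℝ, projL2sq θ μ = 0 := by
      intro θ
      have hmap : μ.map (projCoord θ) = 0 := by rw [hzero]; simp
      have hac : (μ.map (projCoord θ)) ≪ (volume : Measure ℝ) := by
        rw [hmap]
        exact Measure.absolutelyContinuous_of_le (Measure.zero_le _)
      simp only [projL2sq]
      rw [dif_pos hac]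
      have h2 := Measure.rnDeriv_zero (volume : Measure ℝ)
      rw [hmap] at *
      calc (∫⁻ r, ((0 : Measure ℝ).rnDeriv volume r) ^ 2)
          = ∫⁻ _, 0 := by
            refine lintegral_congr_ae ?_
            filter_upwards [Measure.rnDeriv_zero (volume : Measure ℝ)] with t ht
            simp [ht]
        _ = 0 := lintegral_zero
    have hTz : T = 0 := by rw [hT]; simp [hz]
    exact hpos.ne' hTz
  have hEt : μ E ≠ ⊤ := measure_ne_top μ E
  have hT0 : T ≠ 0 := hpos.ne'
  have hTt : T ≠ ⊤ := hfin.ne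
  have hL0 : L ≠ 0 := hIpos.ne'
  have hLt : L ≠ ⊤ := by
    refine ne_top_of_le_ne_top ?_ (measure_mono hIsub)
    rw [Real.volume_Ico, sub_zero]
    exact ENNReal.ofReal_ne_top
  set lam := T / μ E with hlam
  have hlam0 : lam ≠ 0 := by
    rw [hlam]
    simp [ENNReal.div_eq_zero_iff, hT0, hEt]
  have hlamt : lam ≠ ⊤ := (ENNReal.div_lt_top hTt hE0).ne
  set D := 4 * lam with hD
  have hD0 : D ≠ 0 := mul_ne_zero (by norm_num) hlam0
  have hDt : D ≠ ⊤ := ENNReal.mul_ne_top (by norm_num) hlamt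
  set c := L / D with hc
  have hc0 : c ≠ 0 := by
    rw [hc]
    simp [ENNReal.div_eq_zero_iff, hL0, hDt]
  have hct : c ≠ ⊤ := (ENNReal.div_lt_top hLt hD0).ne
  set K := c⁻¹ with hK
  have hK0 : K ≠ 0 := ENNReal.inv_ne_zero.2 hct
  have hKt : K ≠ ⊤ := ENNReal.inv_ne_top.2 hc0
  have hcK : c * K = 1 := ENNReal.mul_inv_cancel hc0 hct
  have hKL : K * L = D := by
    rw [hK, hc, ENNReal.inv_div (Or.inl hDt) (Or.inl hD0)]
    exact ENNReal.div_mul_cancel hL0 hLt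
  -- the removed-mass bound
  have hGm : ∀ n, MeasurableSet (gSet μ K E n) := fun n => gSet_measurable hEmeas n
  have hSsum : ∀ n : ℕ, (∑ k ∈ Finset.range n, μ (gSet μ K E k)) ≤ μ E / 2 := by
    intro n
    set Sn := ∑ k ∈ Finset.range n, μ (gSet μ K E k) with hSsumn
    have hprop : ∀ k, gSet μ K E k = ∅ ∨ ∃ q : ℂ × ℝ, 0 < q.2 ∧
        gSet μ K E k ⊆ Metric.closedBall q.1 q.2 ∧
        K * ENNReal.ofReal q.2 ≤ μ (gSet μ K E k) := by
      intro k
      rcases gSet_prop (μ := μ) (K := K) (E := E) k with ⟨_, h⟩ | ⟨q, h1, h2, h3, _⟩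
      · exact Or.inl h
      · exact Or.inr ⟨q, h1, h2, h3⟩
    have hpoint : ∀ θ : ℝ, K * Sn ≤ 2 * projL2sq θ μ := fun θ =>
      key_sum μ θ n _ hGm gSet_disjoint hprop
    have hint : (K * Sn) * L ≤ 2 * T := by
      calc (K * Sn) * L = ∫⁻ _ in I, K * Sn := by
            rw [setLIntegral_const, hL]
        _ ≤ ∫⁻ θ in I, 2 * projL2sq θ μ := lintegral_mono fun θ => hpoint θ
        _ = 2 * T := by rw [hT]; exact lintegral_const_mul' 2 _ (by norm_num)
    have h1 : Sn * D ≤ 2 * T := by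
      calc Sn * D = (K * Sn) * L := by rw [← hKL]; ring
        _ ≤ 2 * T := hint
    have h2 : (μ E / 2) * D = 2 * T := by
      rw [hD, hlam, show (4:ℝ≥0∞) = 2 * 2 by norm_num]
      calc μ E / 2 * (2 * 2 * (T / μ E)) = (μ E / 2 * 2) * (2 * (T / μ E)) := by ring
        _ = μ E * (2 * (T / μ E)) := by
            rw [ENNReal.div_mul_cancel (by norm_num) (by norm_num)]
        _ = 2 * (μ E * (T / μ E)) := by ring
        _ = 2 * T := by rw [ENNReal.mul_div_cancel hE0 hEt]
    rw [← h2] at h1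
    exact (ENNReal.mul_le_mul_iff_left hD0 hDt).1 h1
  -- the limiting set
  set Fω := ⋂ n, seqSet μ K E n with hFω
  have hFωm : MeasurableSet Fω := MeasurableSet.iInter fun n => seqSet_measurable hEmeas n
  have hFωE : Fω ⊆ E := Set.iInter_subset (fun n => seqSet μ K E n) 0
  have hdiff : μ (E \ Fω) ≤ μ E / 2 := by
    have h1 : E \ Fω = ⋃ n, E \ seqSet μ K E n := by rw [hFω, Set.diff_iInter]
    have h2 : ∀ n, μ (E \ seqSet μ K E n) ≤ μ E / 2 := by
      intro n
      have hsub : E \ seqSet μ K E n ⊆ ⋃ k ∈ Finset.range n, gSet μ K E k := by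
        induction n with
        | zero => intro z hz; exact absurd hz.1 hz.2
        | succ n ih =>
          intro z hz
          by_cases hzn : z ∈ seqSet μ K E n
          · exact Set.mem_biUnion (Finset.self_mem_range_succ n) ⟨hzn, hz.2⟩
          · obtain ⟨k, hk, hzk⟩ := Set.mem_iUnion₂.1 (ih ⟨hz.1, hzn⟩)
            exact Set.mem_iUnion₂.2
              ⟨k, Finset.mem_range.2 (Nat.lt_succ_of_lt (Finset.mem_range.1 hk)), hzk⟩
      calc μ (E \ seqSet μ K E n) ≤ ∑ k ∈ Finset.range n, μ (gSet μ K E k) :=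
            (measure_mono hsub).trans (measure_biUnion_finset_le _ _)
        _ ≤ μ E / 2 := hSsum n
    rw [h1]
    have hmono : Monotone fun n => E \ seqSet μ K E n := fun m n hmn =>
      Set.diff_subset_diff_right (seqSet_antitone hmn)
    rw [hmono.directed_le.measure_iUnion]
    exact iSup_le h2
  have hhalf_ne_top : μ E / 2 ≠ ⊤ := (ENNReal.div_lt_top hEt (by norm_num)).ne
  have hFωmass : μ E / 2 ≤ μ Fω := by
    have h1 : μ E ≤ μ Fω + μ (E \ Fω) := by
      refine (measure_mono fun z hz => ?_).trans (measure_union_le Fω (E \ Fω))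
      by_cases h : z ∈ Fω
      · exact Set.mem_union_left _ h
      · exact Set.mem_union_right _ ⟨hz, h⟩
    have h2 : μ E / 2 + μ E / 2 ≤ μ Fω + μ E / 2 := by
      rw [ENNReal.add_halves]
      exact h1.trans (add_le_add_right hdiff _)
    exact (ENNReal.add_le_add_iff_right hhalf_ne_top).1 h2
  -- no bad pair for Fω
  have hnobad : ∀ q : ℂ × ℝ, ¬ badPair μ K Fω q := by
    intro q hq
    set m0 := μ (Fω ∩ Metric.closedBall q.1 q.2) with hm0
    have hm0pos : 0 < m0 := lt_of_le_of_lt (zero_le) hq.2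
    have hm0t : m0 ≠ ⊤ := measure_ne_top μ _
    have hbadn : ∀ n, badPair μ K (seqSet μ K E n) q := by
      intro n
      refine ⟨hq.1, lt_of_lt_of_le hq.2 (measure_mono ?_)⟩
      exact Set.inter_subset_inter_left _ (Set.iInter_subset _ n)
    have hlow : ∀ n, m0 / 2 ≤ μ (gSet μ K E n) := by
      intro n
      rcases gSet_prop (μ := μ) (K := K) (E := E) n with ⟨hno, _⟩ | ⟨q', _, _, _, h4⟩
      · exact absurd ⟨q, hbadn n⟩ hno
      · have h5 : m0 ≤ μ (seqSet μ K E n ∩ Metric.closedBall q.1 q.2) :=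
          measure_mono (Set.inter_subset_inter_left _ (Set.iInter_subset _ n))
        have h6 : m0 ≤ 2 * μ (gSet μ K E n) := h5.trans (h4 q (hbadn n))
        rw [ENNReal.div_le_iff_le_mul (Or.inl (by norm_num)) (Or.inl (by norm_num))]
        rw [mul_comm] at h6
        exact h6
    have hm02 : m0 / 2 ≠ 0 := by
      simp [ENNReal.div_eq_zero_iff, hm0pos.ne']
    have hm02t : m0 / 2 ≠ ⊤ := (ENNReal.div_lt_top hm0t (by norm_num)).ne
    have hbound : ∀ n : ℕ, (n : ℝ≥0∞) ≤ (μ E / 2) / (m0 / 2) := by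
      intro n
      rw [ENNReal.le_div_iff_mul_le (Or.inl hm02) (Or.inl hm02t)]
      calc (n : ℝ≥0∞) * (m0 / 2) = ∑ _k ∈ Finset.range n, (m0 / 2) := by
            rw [Finset.sum_const, Finset.card_range, nsmul_eq_mul]
        _ ≤ ∑ k ∈ Finset.range n, μ (gSet μ K E k) := Finset.sum_le_sum fun k _ => hlow k
        _ ≤ μ E / 2 := hSsum n
    obtain ⟨n, hn⟩ := ENNReal.exists_nat_gt ((ENNReal.div_lt_top hhalf_ne_top hm02).ne)
    exact absurd (hbound n) (not_le.2 hn)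
  have hgrowth : ∀ (x : ℂ) (r : ℝ), 0 < r →
      μ (Fω ∩ Metric.closedBall x r) ≤ K * ENNReal.ofReal r := by
    intro x r hr
    by_contra hcon
    exact hnobad (x, r) ⟨hr, not_le.1 hcon⟩
  -- compact subset
  have h4ne : (μ E / 4 : ℝ≥0∞) ≠ 0 := by
    simp [ENNReal.div_eq_zero_iff, hE0]
  obtain ⟨F, hFsub, hFcomp, hFmass⟩ :=
    hFωm.exists_isCompact_lt_add (measure_ne_top μ _) h4ne
  have h24 : (μ E / 2) / 2 = μ E / 4 := by
    rw [div_eq_mul_inv, div_eq_mul_inv, div_eq_mul_inv, mul_assoc,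
      ← ENNReal.mul_inv (Or.inl (by norm_num)) (Or.inl (by norm_num))]
    norm_num
  have h4t : (μ E / 4 : ℝ≥0∞) ≠ ⊤ := (ENNReal.div_lt_top hEt (by norm_num)).ne
  have hF4 : μ E / 4 ≤ μ F := by
    have hsplit : μ E / 4 + μ E / 4 = μ E / 2 := by
      rw [← h24]; exact ENNReal.add_halves _
    have h1 : μ E / 4 + μ E / 4 ≤ μ F + μ E / 4 := by
      rw [hsplit]; exact hFωmass.trans hFmass.le
    exact (ENNReal.add_le_add_iff_right h4t).1 h1
  refine ⟨F, hFcomp, hFsub.trans hFωE, ?_, ?_, ?_⟩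
  · -- linear growth
    intro x r hr
    rw [Measure.smul_apply, smul_eq_mul, Measure.restrict_apply measurableSet_ball]
    have h1 : μ (Metric.ball x r ∩ F) ≤ K * ENNReal.ofReal r := by
      refine le_trans (measure_mono fun z hz => ?_) (hgrowth x r hr)
      exact ⟨hFsub hz.2, Metric.ball_subset_closedBall hz.1⟩
    calc c * μ (Metric.ball x r ∩ F) ≤ c * (K * ENNReal.ofReal r) := mul_le_mul_right h1 c
      _ = (c * K) * ENNReal.ofReal r := by ring
      _ = ENNReal.ofReal r := by rw [hcK, one_mul]
  · -- mass lower bound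
    rw [Measure.smul_apply, smul_eq_mul, Measure.restrict_apply_self]
    have hkey : L / (16 * lam) * μ E = c * (μ E / 4) := by
      rw [hc, hD]
      have h16 : (16 : ℝ≥0∞) * lam = 4 * (4 * lam) := by ring
      rw [div_eq_mul_inv, div_eq_mul_inv, div_eq_mul_inv, h16,
        ENNReal.mul_inv (Or.inl (by norm_num)) (Or.inl (by norm_num))]
      ring
    rw [hkey]
    exact mul_le_mul_right hF4 c
  · -- L² bound for the restricted measure
    rw [Measure.smul_apply, smul_eq_mul, Measure.restrict_apply_self]
    have hsm : ∀ θ, projL2sq θ (c • μ.restrict F) = c ^ 2 * projL2sq θ (μ.restrict F) :=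
      fun θ => projL2sq_smul θ (μ.restrict F) hc0 hct
    have hmono : ∀ θ : ℝ, projL2sq θ (μ.restrict F) ≤ projL2sq θ μ :=
      fun θ => projL2sq_mono θ Measure.restrict_le_self
    have hcT : c * T = L * (μ E / 4) := by
      rw [hc, hD, hlam]
      have h1 : (4 * (T / μ E))⁻¹ = 4⁻¹ * (μ E / T) := by
        rw [ENNReal.mul_inv (Or.inl (by norm_num)) (Or.inl (by norm_num)),
          ENNReal.inv_div (Or.inl hEt) (Or.inl hE0)]
      calc L / (4 * (T / μ E)) * T = L * (4⁻¹ * (μ E / T)) * T := by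
            rw [div_eq_mul_inv, h1]
        _ = (L * 4⁻¹) * (μ E / T * T) := by ring
        _ = (L * 4⁻¹) * μ E := by rw [ENNReal.div_mul_cancel hT0 hTt]
        _ = L * (μ E / 4) := by rw [div_eq_mul_inv]; ring
    calc (∫⁻ θ in I, projL2sq θ (c • μ.restrict F))
        = ∫⁻ θ in I, c ^ 2 * projL2sq θ (μ.restrict F) := lintegral_congr fun θ => hsm θ
      _ = c ^ 2 * ∫⁻ θ in I, projL2sq θ (μ.restrict F) :=
          lintegral_const_mul' _ _ (ENNReal.pow_ne_top hct)
      _ ≤ c ^ 2 * T := by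
          rw [hT]
          exact mul_le_mul_right (lintegral_mono fun θ => hmono θ) _
      _ = c * (c * T) := by ring
      _ = c * (L * (μ E / 4)) := by rw [hcT]
      _ = L * (c * (μ E / 4)) := by ring
      _ ≤ L * (c * μ F) := mul_le_mul_right (mul_le_mul_right hF4 c) L
end

section
/- Let 0 < n < d be integers, W ∈ G(d, d−n), and t > 0. There exists A₀ > 10, depending only on d, n, and t, such that the following holds for all A ≥ A₀ and all ε > 0. Let ψ_ε : ℝ^d → [0,∞) be supported in B(0, 2ε) with ∫ψ_ε = 1, and let f_F(y) = χ_{K(W,t)}(y) · χ_{{|y| > Aε}}(y) · |y|^{−n}. Then for every x ∈ ℝ^d, (f_F * ψ_ε)(x) ≤ 2 · χ_{K(W, 2t)}(x) · |x|^{−n}. -/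
set_option maxHeartbeats 1000000


open MeasureTheory Measure Set Filter Metric
open scoped ENNReal Real Topology Classical

lemma aux_pow_le_two (n : ℕ) (hn : 0 < n) : (1 + 1/(2*(n:ℝ)))^n ≤ 2 := by
  have hn1 : (1:ℝ) ≤ n := by exact_mod_cast hn
  set x : ℝ := 1/(2*n) with hxdef
  have hx0 : 0 < x := by positivity
  have hx1 : x ≤ 1/2 := by
    rw [hxdef]; rw [div_le_div_iff₀ (by positivity) (by norm_num)]; linarith
  have hnx : (n:ℝ) * x = 1/2 := by
    rw [hxdef]; field_simp
  have h1 : (1:ℝ)/2 ≤ (1-x)^n := by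
    have := one_add_mul_le_pow (show (-2:ℝ) ≤ -x by linarith) n
    have h : 1 + (n:ℝ) * (-x) = 1/2 := by rw [mul_neg, hnx]; ring
    rw [h] at this
    calc (1:ℝ)/2 ≤ (1 + -x)^n := this
      _ = (1-x)^n := by ring_nf
  have h2 : (1+x)^n * (1-x)^n ≤ 1 := by
    rw [← mul_pow]
    apply pow_le_one₀ (by nlinarith) (by nlinarith)
  have h3 : (0:ℝ) ≤ (1+x)^n := by positivity
  nlinarith

/-- The cone `K(V,t) = {x : dist(x,V) < t|x|}` around a subset `V` of a normed space. -/
def coneK {E : Type*} [NormedAddCommGroup E] (V : Set E) (t : ℝ) : Set E :=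
  {x | Metric.infDist x V < t * ‖x‖}

/-- Let `0 < n < d` and `t > 0`. There is `A₀ > 10`, depending only on
`d, n, t`, such that for all `W ∈ G(d, d-n)`, `A ≥ A₀`, `ε > 0`, any nonnegative `ψ_ε`
supported in `B(0,2ε)` with `∫ψ_ε = 1`, and `f_F(y) = χ_{K(W,t)}(y) χ_{|y|>Aε}(y) |y|⁻ⁿ`,
one has `(f_F * ψ_ε)(x) ≤ 2 χ_{K(W,2t)}(x) |x|⁻ⁿ` for every `x`. -/
theorem statement18 (d n : ℕ) (hn : 0 < n) (hnd : n < d) (t : ℝ) (ht : 0 < t) :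
    ∃ A₀ : ℝ, 10 < A₀ ∧
      ∀ W : Submodule ℝ (EuclideanSpace ℝ (Fin d)), Module.finrank ℝ W = d - n →
      ∀ A : ℝ, A₀ ≤ A → ∀ ε : ℝ, 0 < ε →
      ∀ ψ : EuclideanSpace ℝ (Fin d) → ℝ, (∀ x, 0 ≤ ψ x) →
        Function.support ψ ⊆ Metric.ball 0 (2 * ε) → (∫ x, ψ x = 1) →
      ∀ x : EuclideanSpace ℝ (Fin d),
        (∫ y, Set.indicator
            (coneK (W : Set (EuclideanSpace ℝ (Fin d))) t ∩ {y | A * ε < ‖y‖})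
            (fun y => (‖y‖ ^ n)⁻¹) (x - y) * ψ y)
          ≤ 2 * Set.indicator (coneK (W : Set (EuclideanSpace ℝ (Fin d))) (2 * t))
              (fun x => (‖x‖ ^ n)⁻¹) x := by
  have hn1 : (1:ℝ) ≤ n := by exact_mod_cast hn
  have h2t : (0:ℝ) < 2/t := by positivity
  refine ⟨4*n + 11 + 2/t, by linarith, ?_⟩
  intro W _ A hA ε hε ψ hψ0 hψsupp hψint x
  have hA0 : (0:ℝ) < A := by linarith
  -- ψ is integrable
  have hψI : Integrable ψ := by
    by_contra h
    rw [integral_undef h] at hψint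
    norm_num at hψint
  set c : ℝ := 2 * Set.indicator (coneK (W : Set (EuclideanSpace ℝ (Fin d))) (2 * t))
      (fun x => (‖x‖ ^ n)⁻¹) x with hc
  have hc0 : 0 ≤ c := by
    apply mul_nonneg (by norm_num)
    apply Set.indicator_nonneg
    intro y _; positivity
  -- pointwise bound
  have key : ∀ y : EuclideanSpace ℝ (Fin d),
      Set.indicator (coneK (W : Set (EuclideanSpace ℝ (Fin d))) t ∩ {y | A * ε < ‖y‖})
        (fun y => (‖y‖ ^ n)⁻¹) (x - y) * ψ y ≤ c * ψ y := by
    intro y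
    by_cases hψy : ψ y = 0
    · simp [hψy]
    · have hy : ‖y‖ < 2 * ε := by
        have := hψsupp (Function.mem_support.mpr hψy)
        simpa [Metric.mem_ball, dist_zero_right] using this
      by_cases hS : x - y ∈ coneK (W : Set (EuclideanSpace ℝ (Fin d))) t ∩ {y | A * ε < ‖y‖}
      · have h1 := hS.1
        have h2 := hS.2
        have h1' : Metric.infDist (x - y) (W : Set (EuclideanSpace ℝ (Fin d))) < t * ‖x - y‖ := h1
        have h2' : A * ε < ‖x - y‖ := h2
        have hxy_pos : 0 < ‖x - y‖ := lt_of_le_of_lt (by positivity) h2'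
        have htri1 : ‖x - y‖ ≤ ‖x‖ + ‖y‖ := by
          calc ‖x - y‖ ≤ ‖x‖ + ‖-y‖ := by rw [sub_eq_add_neg]; exact norm_add_le _ _
            _ = ‖x‖ + ‖y‖ := by rw [norm_neg]
        have htri2 : ‖x‖ ≤ ‖x - y‖ + ‖y‖ := by
          calc ‖x‖ = ‖(x - y) + y‖ := by rw [sub_add_cancel]
            _ ≤ ‖x - y‖ + ‖y‖ := norm_add_le _ _
        have hxlb : (A - 2) * ε < ‖x‖ := by nlinarith
        have hx_pos : 0 < ‖x‖ := by
          have : 0 < (A - 2) * ε := by nlinarith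
          linarith
        -- x is in the wider cone
        have hxcone : x ∈ coneK (W : Set (EuclideanSpace ℝ (Fin d))) (2 * t) := by
          have hd : Metric.infDist x (W : Set (EuclideanSpace ℝ (Fin d)))
              ≤ Metric.infDist (x - y) (W : Set (EuclideanSpace ℝ (Fin d))) + dist x (x - y) :=
            Metric.infDist_le_infDist_add_dist
          have hdist : dist x (x - y) = ‖y‖ := by
            rw [dist_eq_norm]; congr 1; abel
          rw [hdist] at hd
          have hAbig : 4 + 2/t ≤ A := by linarith
          show Metric.infDist x (W : Set (EuclideanSpace ℝ (Fin d))) < (2 * t) * ‖x‖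
          have hεx : (2*t + 2) * ε ≤ t * ‖x‖ := by
            have e1 : (2 + 2/t) ≤ A - 2 := by linarith
            have e2 : (2 + 2/t) * ε ≤ (A-2) * ε := mul_le_mul_of_nonneg_right e1 hε.le
            have e3 : t * ((2 + 2/t) * ε) = (2*t+2) * ε := by field_simp
            calc (2*t+2)*ε = t*((2+2/t)*ε) := e3.symm
              _ ≤ t*((A-2)*ε) := mul_le_mul_of_nonneg_left e2 ht.le
              _ ≤ t*‖x‖ := mul_le_mul_of_nonneg_left hxlb.le ht.le
          have e4 : t * ‖x - y‖ ≤ t * (‖x‖ + ‖y‖) := mul_le_mul_of_nonneg_left htri1 ht.le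
          have e5 : t * ‖y‖ < t * (2 * ε) := mul_lt_mul_of_pos_left hy ht
          nlinarith
        -- norm comparison: ‖x‖^n ≤ 2 * ‖x-y‖^n
        have hAn : 4 * (n:ℝ) ≤ A := by linarith
        have hcomp : ‖x‖ ≤ (1 + 1/(2*(n:ℝ))) * ‖x - y‖ := by
          have h2ε : 2 * ε ≤ (2/A) * ‖x - y‖ := by
            rw [div_mul_eq_mul_div, le_div_iff₀ hA0]; nlinarith
          have hfrac : (2/A) * ‖x - y‖ ≤ (1/(2*(n:ℝ))) * ‖x - y‖ := by
            apply mul_le_mul_of_nonneg_right _ (le_of_lt hxy_pos)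
            rw [div_le_div_iff₀ hA0 (by positivity)]
            nlinarith
          nlinarith
        have hpow : ‖x‖^n ≤ 2 * ‖x - y‖^n := by
          calc ‖x‖^n ≤ ((1 + 1/(2*(n:ℝ))) * ‖x - y‖)^n :=
                pow_le_pow_left₀ (norm_nonneg x) hcomp n
            _ = (1 + 1/(2*(n:ℝ)))^n * ‖x - y‖^n := mul_pow _ _ _
            _ ≤ 2 * ‖x - y‖^n := by
                apply mul_le_mul_of_nonneg_right (aux_pow_le_two n hn) (by positivity)
        have hinv : (‖x - y‖^n)⁻¹ ≤ 2 * (‖x‖^n)⁻¹ := by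
          have hp : (0:ℝ) < ‖x - y‖^n := by positivity
          have hq : (0:ℝ) < ‖x‖^n := by positivity
          rw [show (2:ℝ) * (‖x‖^n)⁻¹ = 2 / ‖x‖^n by ring,
              show (‖x - y‖^n)⁻¹ = 1 / ‖x - y‖^n by ring,
              div_le_div_iff₀ hp hq]
          linarith [hpow]
        rw [Set.indicator_of_mem hS, hc, Set.indicator_of_mem hxcone]
        exact mul_le_mul_of_nonneg_right hinv (hψ0 y)
      · rw [Set.indicator_of_notMem hS, zero_mul]
        exact mul_nonneg hc0 (hψ0 y)
  have hnn : ∀ y : EuclideanSpace ℝ (Fin d),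
      0 ≤ Set.indicator (coneK (W : Set (EuclideanSpace ℝ (Fin d))) t ∩ {y | A * ε < ‖y‖})
        (fun y => (‖y‖ ^ n)⁻¹) (x - y) * ψ y := by
    intro y
    apply mul_nonneg _ (hψ0 y)
    apply Set.indicator_nonneg
    intro z _; positivity
  calc (∫ y, Set.indicator
            (coneK (W : Set (EuclideanSpace ℝ (Fin d))) t ∩ {y | A * ε < ‖y‖})
            (fun y => (‖y‖ ^ n)⁻¹) (x - y) * ψ y)
      ≤ ∫ y, c * ψ y := by
        apply integral_mono_of_nonneg (Filter.Eventually.of_forall hnn)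
          (hψI.const_mul c) (Filter.Eventually.of_forall key)
    _ = c * ∫ y, ψ y := integral_const_mul c ψ
    _ = c := by rw [hψint, mul_one]
end

section
/- Let I ⊂ [0,π) be a nonempty open interval and let θ₀ ∈ [0,π) not belong to the closure of I (mod π). Let μ = ℋ¹ restricted to the segment {r e^{iθ₀} : r ∈ [0,1]} ⊂ ℂ. Then ∬_{x−y ∈ K_I∖{0}} |x−y|^{−1} dμ(x) dμ(y) = 0, while 0 < ∫_{I⊥} ‖P_θμ‖₂² dθ < ∞. In particular, the converse of the inequality ∬_{x−y∈K_I∖{0}} |x−y|^{−1} dμ dμ ≤ ∫_{I⊥} ‖P_θμ‖₂² dθ fails for arbitrary measures, even allowing an enlargement of the cone within any aperture not containing θ₀ in its closure. -/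
open MeasureTheory Measure Set Filter Metric
open scoped ENNReal Real Topology Classical

/- ### Auxiliary lemmas -/

private lemma seg_isometry (θ₀ : ℝ) :
    Isometry (fun r : ℝ => (r : ℂ) * Complex.exp ((θ₀ : ℂ) * Complex.I)) := by
  apply Isometry.of_dist_eq
  intro a b
  simp only [Complex.dist_eq, ← sub_mul, ← Complex.ofReal_sub]
  rw [norm_mul, Complex.norm_exp_ofReal_mul_I, mul_one, Complex.norm_real, Real.norm_eq_abs]
  exact (Real.dist_eq a b).symm

private lemma seg_measure (θ₀ : ℝ) :
    (μH[1] : Measure ℂ).restrict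
        ((fun r : ℝ => (r : ℂ) * Complex.exp ((θ₀ : ℂ) * Complex.I)) '' Set.Icc 0 1)
      = Measure.map (fun r : ℝ => (r : ℂ) * Complex.exp ((θ₀ : ℂ) * Complex.I))
          (volume.restrict (Set.Icc 0 1)) := by
  set f : ℝ → ℂ := fun r : ℝ => (r : ℂ) * Complex.exp ((θ₀ : ℂ) * Complex.I) with hf
  have hiso := seg_isometry θ₀
  have hinj : Function.Injective f := hiso.injective
  have hmeas : Measurable f := hiso.continuous.measurable
  ext s hs
  rw [Measure.map_apply hmeas hs, Measure.restrict_apply hs, Measure.restrict_apply (hmeas hs)]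
  have h1 : s ∩ f '' Set.Icc 0 1 = f '' (Set.Icc 0 1 ∩ f ⁻¹' s) := by
    rw [Set.image_inter_preimage, Set.inter_comm]
  rw [h1, hiso.hausdorffMeasure_image (Or.inl zero_le_one)]
  rw [MeasureTheory.hausdorffMeasure_real]
  rw [Set.inter_comm]

private lemma projCoord_seg (θ₀ θ r : ℝ) :
    projCoord θ ((r : ℂ) * Complex.exp ((θ₀ : ℂ) * Complex.I))
      = Real.cos (θ₀ - θ) * r := by
  have h : (r : ℂ) * Complex.exp ((θ₀ : ℂ) * Complex.I) * Complex.exp (-(θ : ℂ) * Complex.I)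
      = (r : ℂ) * Complex.exp (((θ₀ - θ : ℝ) : ℂ) * Complex.I) := by
    rw [mul_assoc, ← Complex.exp_add]
    push_cast
    ring_nf
  rw [projCoord, h, Complex.re_ofReal_mul, Complex.exp_ofReal_mul_I_re, mul_comm]

private lemma measurable_projCoord (θ : ℝ) : Measurable (projCoord θ) :=
  Complex.measurable_re.comp (measurable_id.mul_const _)

private lemma projL2sq_seg (θ₀ θ : ℝ) (hc : Real.cos (θ₀ - θ) ≠ 0) :
    projL2sq θ ((μH[1] : Measure ℂ).restrict
        ((fun r : ℝ => (r : ℂ) * Complex.exp ((θ₀ : ℂ) * Complex.I)) '' Set.Icc 0 1))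
      = ENNReal.ofReal |Real.cos (θ₀ - θ)|⁻¹ := by
  set c : ℝ := Real.cos (θ₀ - θ) with hcdef
  set f : ℝ → ℂ := fun r : ℝ => (r : ℂ) * Complex.exp ((θ₀ : ℂ) * Complex.I) with hf
  have hiso := seg_isometry θ₀
  have hmeas : Measurable f := hiso.continuous.measurable
  set T : Set ℝ := (fun r : ℝ => c * r) '' Set.Icc 0 1 with hT
  have hemb : MeasurableEmbedding (fun r : ℝ => c * r) := by
    have := (Homeomorph.mulLeft₀ c hc).measurableEmbedding
    simpa [Homeomorph.coe_mulLeft₀] using this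
  have hTmeas : MeasurableSet T :=
    ((isCompact_Icc.image (continuous_const.mul continuous_id)).isClosed.measurableSet)
  -- the pushforward measure
  have hmap : ((μH[1] : Measure ℂ).restrict (f '' Set.Icc 0 1)).map (projCoord θ)
      = ENNReal.ofReal |c⁻¹| • (volume.restrict T) := by
    rw [seg_measure θ₀]
    rw [Measure.map_map (measurable_projCoord θ) hmeas]
    have hcomp : (projCoord θ) ∘ f = fun r : ℝ => c * r := by
      funext r
      exact projCoord_seg θ₀ θ r
    rw [hcomp]
    have h1 : (volume.restrict (Set.Icc (0:ℝ) 1)).map (fun r : ℝ => c * r)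
        = ((volume : Measure ℝ).map (fun r : ℝ => c * r)).restrict T := by
      rw [hemb.restrict_map, Set.preimage_image_eq _ hemb.injective]
    rw [h1, Real.map_volume_mul_left hc, Measure.restrict_smul]
  have hvolT : volume T = ENNReal.ofReal |c| := by
    have h2 := congrArg (fun m : Measure ℝ => m T) (Real.map_volume_mul_left hc)
    simp only [Measure.smul_apply, smul_eq_mul] at h2
    rw [Measure.map_apply hemb.measurable hTmeas,
      Set.preimage_image_eq _ hemb.injective] at h2
    have h3 : volume (Set.Icc (0:ℝ) 1) = 1 := by
      rw [Real.volume_Icc]; norm_num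
    rw [h3] at h2
    have h4 : ENNReal.ofReal |c| * ENNReal.ofReal |c⁻¹| = 1 := by
      rw [← ENNReal.ofReal_mul (abs_nonneg _), abs_inv, mul_inv_cancel₀ (abs_ne_zero.2 hc)]
      exact ENNReal.ofReal_one
    calc volume T = 1 * volume T := (one_mul _).symm
      _ = ENNReal.ofReal |c| * (ENNReal.ofReal |c⁻¹| * volume T) := by rw [← mul_assoc, h4]
      _ = ENNReal.ofReal |c| := by rw [← h2, mul_one]
  set a : ℝ≥0∞ := ENNReal.ofReal |c⁻¹| with ha
  have hane : a ≠ ⊤ := ENNReal.ofReal_ne_top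
  have hac : (a • (volume.restrict T)) ≪ (volume : Measure ℝ) := by
    intro s hs
    have h5 : volume.restrict T s ≤ volume s := Measure.restrict_le_self s
    have h6 : volume.restrict T s = 0 := le_antisymm (hs ▸ h5) zero_le
    simp [Measure.smul_apply, h6]
  have hrn : (a • (volume.restrict T)).rnDeriv volume
      =ᵐ[volume] fun r => a * T.indicator 1 r := by
    filter_upwards [Measure.rnDeriv_smul_left_of_ne_top' (volume.restrict T) volume hane,
      Measure.rnDeriv_restrict_self volume hTmeas] with r h7 h8
    rw [h7]
    simp only [Pi.smul_apply, smul_eq_mul, h8]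
  rw [projL2sq, hmap, dif_pos hac]
  calc ∫⁻ r, ((a • volume.restrict T).rnDeriv volume r) ^ 2
      = ∫⁻ r, (a * T.indicator 1 r) ^ 2 := by
        apply lintegral_congr_ae
        filter_upwards [hrn] with r hr using by rw [hr]
    _ = ∫⁻ r, a ^ 2 * T.indicator 1 r := by
        apply lintegral_congr
        intro r
        by_cases hrT : r ∈ T <;> simp [Set.indicator, hrT, mul_pow]
    _ = a ^ 2 * volume T := by
        rw [lintegral_const_mul _ (measurable_one.indicator hTmeas), lintegral_indicator_one hTmeas]
    _ = ENNReal.ofReal |c|⁻¹ := by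
        rw [hvolT, ha, sq, ← ENNReal.ofReal_mul (abs_nonneg _),
          ← ENNReal.ofReal_mul (by positivity)]
        congr 1
        rw [abs_inv]
        field_simp

/-- Let `I ⊆ [0,π)` be a nonempty open interval and `θ₀ ∈ [0,π)` with
`θ₀ ∉ closure I (mod π)`. For `μ = ℋ¹` restricted to the unit segment in direction `e^{iθ₀}`,
the conical energy `∬_{x-y ∈ K_I \ {0}} |x-y|⁻¹ dμ dμ` vanishes, while
`0 < ∫_{I⊥} ‖P_θ μ‖₂² dθ < ∞`; so the converse of the energy–projection inequality fails. -/
theorem statement19 (I : Set ℝ) (hne : I.Nonempty) (hIopen : IsOpen I)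
    (hIconn : I.OrdConnected) (hIsub : I ⊆ Set.Ico 0 π)
    (θ₀ : ℝ) (hθ₀ : θ₀ ∈ Set.Ico 0 π)
    (hcl : ∀ k : ℤ, θ₀ + k * π ∉ closure I) :
    (∫⁻ x, ∫⁻ y, Set.indicator {y | x - y ∈ coneOf I \ {0}}
        (fun y => ENNReal.ofReal ‖x - y‖⁻¹) y
        ∂((μH[1] : Measure ℂ).restrict
            ((fun r : ℝ => (r : ℂ) * Complex.exp ((θ₀ : ℂ) * Complex.I)) '' Set.Icc 0 1))
        ∂((μH[1] : Measure ℂ).restrict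
            ((fun r : ℝ => (r : ℂ) * Complex.exp ((θ₀ : ℂ) * Complex.I)) '' Set.Icc 0 1))) = 0 ∧
    0 < (∫⁻ θ in (fun θ => θ + π / 2) '' I, projL2sq θ
          ((μH[1] : Measure ℂ).restrict
            ((fun r : ℝ => (r : ℂ) * Complex.exp ((θ₀ : ℂ) * Complex.I)) '' Set.Icc 0 1))) ∧
    (∫⁻ θ in (fun θ => θ + π / 2) '' I, projL2sq θ
          ((μH[1] : Measure ℂ).restrict
            ((fun r : ℝ => (r : ℂ) * Complex.exp ((θ₀ : ℂ) * Complex.I)) '' Set.Icc 0 1))) < ⊤ := by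
  set f : ℝ → ℂ := fun r : ℝ => (r : ℂ) * Complex.exp ((θ₀ : ℂ) * Complex.I) with hf
  set μ : Measure ℂ := (μH[1] : Measure ℂ).restrict (f '' Set.Icc 0 1) with hμ
  have hiso := seg_isometry θ₀
  have hSeg : MeasurableSet (f '' Set.Icc 0 1) :=
    (isCompact_Icc.image hiso.continuous).isClosed.measurableSet
  -- the key angle fact: directions in `I` differ from `θ₀` mod `π`
  have hangle : ∀ θ ∈ I, Real.sin (θ₀ - θ) ≠ 0 := by
    intro θ hθ h0
    rw [Real.sin_eq_zero_iff] at h0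
    obtain ⟨n, hn⟩ := h0
    exact hcl (-n) (by
      have : θ₀ + (-n : ℤ) * π = θ := by push_cast; linarith
      rw [this]
      exact subset_closure hθ)
  have hangle' : ∀ θ' ∈ closure I, Real.sin (θ₀ - θ') ≠ 0 := by
    intro θ' hθ' h0
    rw [Real.sin_eq_zero_iff] at h0
    obtain ⟨n, hn⟩ := h0
    exact hcl (-n) (by
      have : θ₀ + (-n : ℤ) * π = θ' := by push_cast; linarith
      rw [this]; exact hθ')
  refine ⟨?_, ?_, ?_⟩
  · -- conical energy vanishes
    have key : ∀ x ∈ f '' Set.Icc 0 1, ∀ y ∈ f '' Set.Icc 0 1,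
        Set.indicator {y | x - y ∈ coneOf I \ {0}}
          (fun y => ENNReal.ofReal ‖x - y‖⁻¹) y = 0 := by
      rintro x ⟨r, -, rfl⟩ y ⟨s, -, rfl⟩
      apply Set.indicator_of_notMem
      rintro ⟨⟨t, θ, hθI, hEq⟩, hne0⟩
      simp only [Set.mem_singleton_iff] at hne0
      have hd : f r - f s = ((r - s : ℝ) : ℂ) * Complex.exp ((θ₀ : ℂ) * Complex.I) := by
        simp only [hf]; push_cast; ring
      have hdne : (r : ℝ) - s ≠ 0 := by
        intro h0
        apply hne0
        rw [hd, h0]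
        simp
      rw [hd] at hEq
      have hre := congrArg Complex.re hEq
      have him := congrArg Complex.im hEq
      simp only [Complex.re_ofReal_mul, Complex.im_ofReal_mul,
        Complex.exp_ofReal_mul_I_re, Complex.exp_ofReal_mul_I_im] at hre him
      have hsin : Real.sin (θ₀ - θ) = 0 := by
        have h1 : (r - s) * Real.sin (θ₀ - θ) = 0 := by
          rw [Real.sin_sub]
          linear_combination Real.cos θ * him - Real.sin θ * hre
        rcases mul_eq_zero.1 h1 with h | h
        · exact absurd h hdne
        · exact h
      exact hangle θ hθI hsin
    have inner0 : ∀ x ∈ f '' Set.Icc 0 1,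
        (∫⁻ y, Set.indicator {y | x - y ∈ coneOf I \ {0}}
          (fun y => ENNReal.ofReal ‖x - y‖⁻¹) y ∂μ) = 0 := by
      intro x hx
      have hae : ∀ᵐ y ∂μ, Set.indicator {y | x - y ∈ coneOf I \ {0}}
          (fun y => ENNReal.ofReal ‖x - y‖⁻¹) y = 0 := by
        rw [hμ]
        filter_upwards [ae_restrict_mem hSeg] with y hy using key x hx y hy
      rw [lintegral_congr_ae hae, lintegral_zero]
    have hae2 : ∀ᵐ x ∂μ, (∫⁻ y, Set.indicator {y | x - y ∈ coneOf I \ {0}}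
        (fun y => ENNReal.ofReal ‖x - y‖⁻¹) y ∂μ) = 0 := by
      rw [hμ]
      filter_upwards [ae_restrict_mem hSeg] with x hx using inner0 x hx
    rw [lintegral_congr_ae hae2, lintegral_zero]
  -- shared setup for the projection integral
  · have hS'eq : (fun θ : ℝ => θ + π / 2) '' I = (fun θ : ℝ => θ - π / 2) ⁻¹' I := by
      ext x
      simp only [Set.mem_image, Set.mem_preimage]
      constructor
      · rintro ⟨θ', hθ', rfl⟩; simpa using hθ'
      · intro hx; exact ⟨x - π / 2, hx, by ring⟩
    have hS'meas : MeasurableSet ((fun θ : ℝ => θ + π / 2) '' I) := by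
      rw [hS'eq]
      exact (hIopen.preimage (continuous_sub_right _)).measurableSet
    have hvolS' : volume ((fun θ : ℝ => θ + π / 2) '' I) = volume I := by
      rw [hS'eq]
      have : (fun θ : ℝ => θ - π / 2) = fun θ : ℝ => θ + (-(π / 2)) := by
        funext θ; ring
      rw [this, measure_preimage_add_right]
    have hval : ∀ x ∈ (fun θ : ℝ => θ + π / 2) '' I,
        projL2sq x μ = ENNReal.ofReal |Real.sin (θ₀ - (x - π / 2))|⁻¹ := by
      rintro x ⟨θ', hθ', rfl⟩
      have hcos : Real.cos (θ₀ - (θ' + π / 2)) = Real.sin (θ₀ - θ') := by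
        rw [show θ₀ - (θ' + π / 2) = (θ₀ - θ') - π / 2 by ring, Real.cos_sub_pi_div_two]
      have hc : Real.cos (θ₀ - (θ' + π / 2)) ≠ 0 := by
        rw [hcos]; exact hangle θ' hθ'
      rw [hμ, projL2sq_seg θ₀ (θ' + π / 2) hc, hcos]
      congr 2
      rw [show θ' + π / 2 - π / 2 = θ' by ring]
    -- positivity
    have hlow : ∀ᵐ x ∂(volume.restrict ((fun θ : ℝ => θ + π / 2) '' I)),
        (1 : ℝ≥0∞) ≤ projL2sq x μ := by
      filter_upwards [ae_restrict_mem hS'meas] with x hx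
      rw [hval x hx]
      rw [show (1 : ℝ≥0∞) = ENNReal.ofReal 1 from ENNReal.ofReal_one.symm]
      apply ENNReal.ofReal_le_ofReal
      have hx0 : Real.sin (θ₀ - (x - π / 2)) ≠ 0 := by
        rcases hx with ⟨θ', hθ', rfl⟩
        rw [show θ' + π / 2 - π / 2 = θ' by ring]
        exact hangle θ' hθ'
      rw [le_inv_comm₀ one_pos (abs_pos.2 hx0), inv_one]
      exact abs_le.2 ⟨Real.neg_one_le_sin _, Real.sin_le_one _⟩
    have h1 : volume I ≤ ∫⁻ θ in (fun θ : ℝ => θ + π / 2) '' I, projL2sq θ μ := by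
      calc volume I = volume ((fun θ : ℝ => θ + π / 2) '' I) := hvolS'.symm
        _ = ∫⁻ _ in (fun θ : ℝ => θ + π / 2) '' I, (1 : ℝ≥0∞) := (setLIntegral_one _).symm
        _ ≤ _ := lintegral_mono_ae hlow
    exact lt_of_lt_of_le (hIopen.measure_pos volume hne) h1
  · -- finiteness
    have hS'eq : (fun θ : ℝ => θ + π / 2) '' I = (fun θ : ℝ => θ - π / 2) ⁻¹' I := by
      ext x
      simp only [Set.mem_image, Set.mem_preimage]
      constructor
      · rintro ⟨θ', hθ', rfl⟩; simpa using hθ'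
      · intro hx; exact ⟨x - π / 2, hx, by ring⟩
    have hS'meas : MeasurableSet ((fun θ : ℝ => θ + π / 2) '' I) := by
      rw [hS'eq]
      exact (hIopen.preimage (continuous_sub_right _)).measurableSet
    have hvolS' : volume ((fun θ : ℝ => θ + π / 2) '' I) = volume I := by
      rw [hS'eq]
      have : (fun θ : ℝ => θ - π / 2) = fun θ : ℝ => θ + (-(π / 2)) := by
        funext θ; ring
      rw [this, measure_preimage_add_right]
    have hval : ∀ x ∈ (fun θ : ℝ => θ + π / 2) '' I,
        projL2sq x μ = ENNReal.ofReal |Real.sin (θ₀ - (x - π / 2))|⁻¹ := by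
      rintro x ⟨θ', hθ', rfl⟩
      have hcos : Real.cos (θ₀ - (θ' + π / 2)) = Real.sin (θ₀ - θ') := by
        rw [show θ₀ - (θ' + π / 2) = (θ₀ - θ') - π / 2 by ring, Real.cos_sub_pi_div_two]
      have hc : Real.cos (θ₀ - (θ' + π / 2)) ≠ 0 := by
        rw [hcos]; exact hangle θ' hθ'
      rw [hμ, projL2sq_seg θ₀ (θ' + π / 2) hc, hcos]
      congr 2
      rw [show θ' + π / 2 - π / 2 = θ' by ring]
    have hclI : IsCompact (closure I) := by
      have hIbd : Bornology.IsBounded I :=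
        (Metric.isBounded_Icc 0 π).subset (hIsub.trans Set.Ico_subset_Icc_self)
      exact hIbd.isCompact_closure
    have hclne : (closure I).Nonempty := hne.closure
    have hcont : ContinuousOn (fun θ' => |Real.sin (θ₀ - θ')|) (closure I) :=
      ((Real.continuous_sin.comp (continuous_const.sub continuous_id)).abs).continuousOn
    obtain ⟨θm, hθm, hmin⟩ := hclI.exists_isMinOn hclne hcont
    set δ : ℝ := |Real.sin (θ₀ - θm)| with hδ
    have hδpos : 0 < δ := abs_pos.2 (hangle' θm hθm)
    have hupae : ∀ᵐ x ∂(volume.restrict ((fun θ : ℝ => θ + π / 2) '' I)),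
        projL2sq x μ ≤ ENNReal.ofReal δ⁻¹ := by
      filter_upwards [ae_restrict_mem hS'meas] with x hx
      rw [hval x hx]
      apply ENNReal.ofReal_le_ofReal
      apply inv_anti₀ hδpos
      rcases hx with ⟨θ', hθ', rfl⟩
      rw [show θ' + π / 2 - π / 2 = θ' by ring]
      exact hmin (subset_closure hθ')
    have h2 : ∫⁻ θ in (fun θ : ℝ => θ + π / 2) '' I, projL2sq θ μ
        ≤ ENNReal.ofReal δ⁻¹ * volume I := by
      calc ∫⁻ θ in (fun θ : ℝ => θ + π / 2) '' I, projL2sq θ μ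
          ≤ ∫⁻ _ in (fun θ : ℝ => θ + π / 2) '' I, ENNReal.ofReal δ⁻¹ :=
            lintegral_mono_ae hupae
        _ = ENNReal.ofReal δ⁻¹ * volume ((fun θ : ℝ => θ + π / 2) '' I) :=
            setLIntegral_const _ _
        _ = ENNReal.ofReal δ⁻¹ * volume I := by rw [hvolS']
    have h3 : volume I < ⊤ := by
      calc volume I ≤ volume (Set.Ico 0 π) := measure_mono hIsub
        _ = ENNReal.ofReal π := by rw [Real.volume_Ico, sub_zero]
        _ < ⊤ := ENNReal.ofReal_lt_top
    exact lt_of_le_of_lt h2 (ENNReal.mul_lt_top ENNReal.ofReal_lt_top h3)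
end
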